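/- arXiv:2302.04229 — 4 statements merged into one kernel-verified Lean document; each statement's English description precedes it below -/
import Mathlib

section
/- For every string X, every fragment X[i..j), and every quasimetric weight function w, the weighted edit distance between X and its substring X[i..j) equals the weighted edit distance between the concatenation X[0..i)·X[j..|X|) and the empty string; that is, ed^w(X, X[i..j)) = Σ_{u ∈ [0..i) ∪ [j..|X|)} w(X[u], ε). -/
variable {σ : Type*}

/-- A weight function: nonnegative with `w a a = 0`. -/
def IsWeight (w : Option σ → Option σ → ℝ) : Prop :=
  (∀ a b, 0 ≤ w a b) ∧ (∀ a, w a a = 0)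

/-- A quasimetric: a weight function satisfying the triangle inequality. -/
def Quasimetric (w : Option σ → Option σ → ℝ) : Prop :=
  IsWeight w ∧ ∀ a b c, w a c ≤ w a b + w b c

/-- A normalized weight function: `w a b ≥ 1` whenever `a ≠ b`. -/
def Normalized (w : Option σ → Option σ → ℝ) : Prop :=
  IsWeight w ∧ ∀ a b, a ≠ b → 1 ≤ w a b

/-- `EdAux w X Y c` holds iff some alignment of `X` onto `Y` has total cost `c`,
where deleting `a` costs `w (some a) none`, inserting `b` costs `w none (some b)`, and
aligning `a` to `b` costs `w (some a) (some b)`. -/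
inductive EdAux (w : Option σ → Option σ → ℝ) : List σ → List σ → ℝ → Prop
  | nil : EdAux w [] [] 0
  | del {X Y : List σ} {c : ℝ} (a : σ) :
      EdAux w X Y c → EdAux w (a :: X) Y (w (some a) none + c)
  | ins {X Y : List σ} {c : ℝ} (b : σ) :
      EdAux w X Y c → EdAux w X (b :: Y) (w none (some b) + c)
  | sub {X Y : List σ} {c : ℝ} (a b : σ) :
      EdAux w X Y c → EdAux w (a :: X) (b :: Y) (w (some a) (some b) + c)

/-- Weighted edit distance: the minimum cost over all alignments. -/
noncomputable def ed (w : Option σ → Option σ → ℝ) (X Y : List σ) : ℝ :=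
  sInf {c | EdAux w X Y c}

/-- Weighted edit distance capped at threshold `k`: equals `ed w X Y` if that is `≤ k`,
and `∞` otherwise. -/
noncomputable def edK (w : Option σ → Option σ → ℝ) (k : ℝ) (X Y : List σ) : EReal :=
  if ed w X Y ≤ k then ((ed w X Y : ℝ) : EReal) else ⊤

open scoped Classical in
/-- The discrete weight function; `ed discreteW` is the unweighted (Levenshtein) distance. -/
noncomputable def discreteW : Option σ → Option σ → ℝ :=
  fun a b => if a = b then 0 else 1

/-- The fragment `X[i..j)`. -/
def seg (X : List σ) (i j : ℕ) : List σ := (X.drop i).take (j - i)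

/-- Total deletion cost of a string. -/
noncomputable def sumDel (w : Option σ → Option σ → ℝ) (Z : List σ) : ℝ :=
  (Z.map (fun a => w (some a) none)).sum

lemma edAux_nil_right (w : Option σ → Option σ → ℝ) :
    ∀ Z : List σ, EdAux w Z [] (sumDel w Z) := by
  intro Z
  induction Z with
  | nil => exact EdAux.nil
  | cons a Z ih => exact EdAux.del a ih

lemma edAux_nil_right_eq {w : Option σ → Option σ → ℝ} {Z Y : List σ} {c : ℝ}
    (h : EdAux w Z Y c) (hY : Y = []) : c = sumDel w Z := by
  induction h with
  | nil => simp [sumDel]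
  | del a h ih => simp [sumDel, ih hY]
  | ins b h ih => simp at hY
  | sub a b h ih => simp at hY

lemma edAux_prepend_del {w : Option σ → Option σ → ℝ} {X Y : List σ} {c : ℝ}
    (P : List σ) (h : EdAux w X Y c) : EdAux w (P ++ X) Y (sumDel w P + c) := by
  induction P with
  | nil => simpa [sumDel] using h
  | cons a P ih =>
    have := EdAux.del (w := w) a ih
    simpa [sumDel, add_assoc] using this

lemma edAux_prepend_match {w : Option σ → Option σ → ℝ} (hw : ∀ a, w a a = 0)
    {X Y : List σ} {c : ℝ} (M : List σ) (h : EdAux w X Y c) :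
    EdAux w (M ++ X) (M ++ Y) c := by
  induction M with
  | nil => simpa using h
  | cons a M ih =>
    have := EdAux.sub (w := w) a a ih
    simpa [hw a] using this

/-- Key lower bound for quasimetric weights. -/
lemma edAux_lower {w : Option σ → Option σ → ℝ} (hw : Quasimetric w)
    {X Y : List σ} {c : ℝ} (h : EdAux w X Y c) :
    sumDel w X ≤ sumDel w Y + c := by
  obtain ⟨⟨hpos, hrefl⟩, htri⟩ := hw
  induction h with
  | nil => simp [sumDel]
  | del a h ih => simp only [sumDel, List.map_cons, List.sum_cons] at *; linarith
  | ins b h ih =>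
    have h0 : (0 : ℝ) ≤ w none (some b) + w (some b) none := by
      have := htri none (some b) none
      simpa [hrefl] using this
    simp only [sumDel, List.map_cons, List.sum_cons] at *; linarith
  | sub a b h ih =>
    have h0 : w (some a) none ≤ w (some a) (some b) + w (some b) none :=
      htri (some a) (some b) none
    simp only [sumDel, List.map_cons, List.sum_cons] at *; linarith

lemma seg_decomp (X : List σ) (i j : ℕ) (hij : i ≤ j) :
    X = X.take i ++ seg X i j ++ X.drop j := by
  have h1 : seg X i j ++ X.drop j = X.drop i := by
    have : (X.drop i).drop (j - i) = X.drop j := by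
      rw [List.drop_drop]; congr 1; omega
    rw [seg, ← this, List.take_append_drop]
  rw [List.append_assoc, h1, List.take_append_drop]

/-- For every string `X`, every fragment `X[i..j)`, and every quasimetric
weight function `w`: `ed^w(X, X[i..j))` equals `ed^w(X[0..i) ++ X[j..|X|), ε)`, i.e. the
total deletion cost `Σ_{u ∈ [0..i) ∪ [j..|X|)} w(X[u], ε)`. -/
theorem ed_substring_eq_deletion_cost (w : Option σ → Option σ → ℝ) (hw : Quasimetric w)
    (X : List σ) (i j : ℕ) (hij : i ≤ j) (hj : j ≤ X.length) :
    ed w X (seg X i j) = ed w (X.take i ++ X.drop j) [] ∧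
    ed w X (seg X i j) = ((X.take i ++ X.drop j).map (fun a => w (some a) none)).sum := by
  obtain ⟨⟨hpos, hrefl⟩, htri⟩ := hw
  set Y := seg X i j with hY
  set Z := X.take i ++ X.drop j with hZ
  have hsumZ : sumDel w Z = sumDel w (X.take i) + sumDel w (X.drop j) := by
    simp [sumDel, hZ]
  -- ed w Z [] = sumDel w Z
  have hZed : ed w Z [] = sumDel w Z := by
    have hmem : EdAux w Z [] (sumDel w Z) := edAux_nil_right w Z
    have huniq : ∀ c ∈ {c | EdAux w Z [] c}, c = sumDel w Z := fun c hc =>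
      edAux_nil_right_eq hc rfl
    have : {c | EdAux w Z [] c} = {sumDel w Z} := by
      ext c; constructor
      · exact fun hc => huniq c hc
      · rintro rfl; exact hmem
    rw [ed, this, csInf_singleton]
  -- upper bound witness for ed w X Y
  have hwit : EdAux w X Y (sumDel w Z) := by
    have h1 : EdAux w (X.drop j) [] (sumDel w (X.drop j)) := edAux_nil_right w _
    have h2 : EdAux w (Y ++ X.drop j) (Y ++ []) (sumDel w (X.drop j)) :=
      edAux_prepend_match hrefl Y h1
    have h3 : EdAux w (X.take i ++ (Y ++ X.drop j)) Y
        (sumDel w (X.take i) + sumDel w (X.drop j)) := by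
      simpa using edAux_prepend_del (X.take i) h2
    rw [hsumZ]
    have hX : X = X.take i ++ (Y ++ X.drop j) := by
      simpa [List.append_assoc] using seg_decomp X i j hij
    rw [← hX] at h3; exact h3
  have hlb : ∀ c ∈ {c | EdAux w X Y c}, sumDel w Z ≤ c := by
    intro c hc
    have := edAux_lower ⟨⟨hpos, hrefl⟩, htri⟩ hc
    have hsum : sumDel w X = sumDel w (X.take i) + sumDel w Y + sumDel w (X.drop j) := by
      conv_lhs => rw [seg_decomp X i j hij]
      simp [sumDel, hY, add_assoc]
    rw [hsum] at this
    rw [hsumZ]; linarith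
  have hed : ed w X Y = sumDel w Z := by
    apply le_antisymm
    · exact csInf_le ⟨sumDel w Z, hlb⟩ hwit
    · exact le_csInf ⟨_, hwit⟩ hlb
  exact ⟨hed.trans hZed.symm, hed⟩
end

section
/- Let k ≥ 1 be an integer, Q a string, and e, e' ≥ 4k integers. Then for every normalized weight function w, the strings Q^e and Q^{e'} are ed^w_{≤k}-equivalent: for all strings X and Y containing occurrences of Q^e at positions p_X and p_Y respectively with |p_X − p_Y| ≤ k, replacing both occurrences by Q^{e'} leaves the capped weighted edit distance ed^w_{≤k}(X,Y) unchanged. -/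
variable {σ : Type*}

/-- `Q^e`: concatenation of `e` copies of `Q`. -/
def listPow (Q : List σ) (e : ℕ) : List σ := (List.replicate e Q).flatten

/-- `P` occurs in `X` at position `p`. -/
def OccursAt (P X : List σ) (p : ℕ) : Prop :=
  p + P.length ≤ X.length ∧ seg X p (p + P.length) = P

/-- A primitive string: nonempty and not a proper power. -/
def Primitive (Q : List σ) : Prop :=
  Q ≠ [] ∧ ∀ (R : List σ) (m : ℕ), 2 ≤ m → Q ≠ listPow R m

/-- `S` avoids `k`-periodicity: it contains no substring `Q^{4k+1}` with `|Q| ∈ [1..2k]`. -/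
def AvoidsPeriodicity (k : ℕ) (S : List σ) : Prop :=
  ∀ Q : List σ, 1 ≤ Q.length → Q.length ≤ 2 * k → ¬ listPow Q (4 * k + 1) <:+: S

/-- `P` and `P'` are `ed^w_{≤k}`-equivalent: replacing `k`-synchronized occurrences of `P`
in `X` and `Y` by `P'` preserves the capped weighted edit distance. -/
def EdEquiv (w : Option σ → Option σ → ℝ) (k : ℕ) (P P' : List σ) : Prop :=
  ∀ (X Y : List σ) (pX pY : ℕ),
    OccursAt P X pX → OccursAt P Y pY → |(pX : ℤ) - (pY : ℤ)| ≤ (k : ℤ) →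
    edK w (k : ℝ) X Y =
      edK w (k : ℝ) (X.take pX ++ P' ++ X.drop (pX + P.length))
        (Y.take pY ++ P' ++ Y.drop (pY + P.length))

namespace PowEq

open Classical in
noncomputable instance (p : Prop) : Decidable p := Classical.propDecidable p

variable {σ : Type*}

inductive Op (σ : Type*)
  | del (a : σ) | ins (b : σ) | sub (a b : σ)

def src : List (Op σ) → List σ
  | [] => []
  | .del a :: o => a :: src o
  | .ins _ :: o => src o
  | .sub a _ :: o => a :: src o

def tgt : List (Op σ) → List σ
  | [] => []
  | .del _ :: o => tgt o
  | .ins b :: o => b :: tgt o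
  | .sub _ b :: o => b :: tgt o

def opCost (w : Option σ → Option σ → ℝ) : Op σ → ℝ
  | .del a => w (some a) none
  | .ins b => w none (some b)
  | .sub a b => w (some a) (some b)

def cost (w : Option σ → Option σ → ℝ) (o : List (Op σ)) : ℝ := (o.map (opCost w)).sum

def IsGood : Op σ → Prop := fun op => ∃ a, op = .sub a a

noncomputable def badCount : List (Op σ) → ℕ
  | [] => 0
  | op :: o => (if IsGood op then 0 else 1) + badCount o

def matchOps (R : List σ) : List (Op σ) := R.map (fun a => .sub a a)

@[simp] lemma src_nil : src ([] : List (Op σ)) = [] := rfl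
@[simp] lemma tgt_nil : tgt ([] : List (Op σ)) = [] := rfl

lemma src_append (o₁ o₂ : List (Op σ)) : src (o₁ ++ o₂) = src o₁ ++ src o₂ := by
  induction o₁ with
  | nil => rfl
  | cons op o ih => cases op <;> simp [src, ih]

lemma tgt_append (o₁ o₂ : List (Op σ)) : tgt (o₁ ++ o₂) = tgt o₁ ++ tgt o₂ := by
  induction o₁ with
  | nil => rfl
  | cons op o ih => cases op <;> simp [tgt, ih]

lemma cost_append (w : Option σ → Option σ → ℝ) (o₁ o₂ : List (Op σ)) :
    cost w (o₁ ++ o₂) = cost w o₁ + cost w o₂ := by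
  simp [cost]

lemma badCount_append (o₁ o₂ : List (Op σ)) :
    badCount (o₁ ++ o₂) = badCount o₁ + badCount o₂ := by
  induction o₁ with
  | nil => simp [badCount]
  | cons op o ih => simp [badCount, ih]; ring

@[simp] lemma src_matchOps (R : List σ) : src (matchOps R) = R := by
  induction R with
  | nil => rfl
  | cons a R ih => simp [matchOps, src] at ih ⊢; exact ih

@[simp] lemma tgt_matchOps (R : List σ) : tgt (matchOps R) = R := by
  induction R with
  | nil => rfl
  | cons a R ih => simp [matchOps, tgt] at ih ⊢; exact ih

lemma cost_matchOps (w : Option σ → Option σ → ℝ) (hw : IsWeight w) (R : List σ) :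
    cost w (matchOps R) = 0 := by
  induction R with
  | nil => simp [cost, matchOps]
  | cons a R ih =>
    simp [cost, matchOps, opCost] at ih ⊢
    rw [hw.2]; simpa using ih

lemma badCount_matchOps (R : List σ) : badCount (matchOps R) = 0 := by
  induction R with
  | nil => rfl
  | cons a R ih =>
    simp [matchOps, badCount] at ih ⊢
    exact ⟨⟨a, rfl⟩, ih⟩

lemma tgt_length_le (o : List (Op σ)) : (tgt o).length ≤ (src o).length + badCount o := by
  induction o with
  | nil => simp
  | cons op o ih =>
    cases op with
    | del a => simp [src, tgt, badCount, IsGood]; omega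
    | ins b =>
      have : ¬ IsGood (Op.ins b : Op σ) := by rintro ⟨a, h⟩; cases h
      simp [src, tgt, badCount, if_neg this]; omega
    | sub a b => simp [src, tgt, badCount]; omega

lemma src_length_le (o : List (Op σ)) : (src o).length ≤ (tgt o).length + badCount o := by
  induction o with
  | nil => simp
  | cons op o ih =>
    cases op with
    | del a =>
      have : ¬ IsGood (Op.del a : Op σ) := by rintro ⟨x, h⟩; cases h
      simp [src, tgt, badCount, if_neg this]; omega
    | ins b => simp [src, tgt, badCount]; omega
    | sub a b => simp [src, tgt, badCount]; omega

lemma src_length_le_length (o : List (Op σ)) : (src o).length ≤ o.length := by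
  induction o with
  | nil => simp
  | cons op o ih => cases op <;> simp [src] <;> omega

lemma cost_nonneg (w : Option σ → Option σ → ℝ) (hw : IsWeight w) (o : List (Op σ)) :
    0 ≤ cost w o := by
  induction o with
  | nil => simp [cost]
  | cons op o ih =>
    have : 0 ≤ opCost w op := by cases op <;> exact hw.1 _ _
    simp only [cost, List.map_cons, List.sum_cons] at ih ⊢
    linarith

lemma badCount_le_cost (w : Option σ → Option σ → ℝ) (hw : Normalized w) (o : List (Op σ)) :
    (badCount o : ℝ) ≤ cost w o := by
  induction o with
  | nil => simp [badCount, cost]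
  | cons op o ih =>
    simp only [cost, List.map_cons, List.sum_cons, badCount] at ih ⊢
    by_cases h : IsGood op
    · obtain ⟨a, rfl⟩ := h
      rw [if_pos ⟨a, rfl⟩]
      simp only [opCost, hw.1.2]
      simpa using ih
    · rw [if_neg h]
      have h1 : 1 ≤ opCost w op := by
        cases op with
        | del a => exact hw.2 _ _ (by simp)
        | ins b => exact hw.2 _ _ (by simp)
        | sub a b =>
          refine hw.2 _ _ ?_
          simp only [ne_eq, Option.some.injEq]
          intro hab; exact h ⟨a, by rw [hab]⟩
      push_cast
      linarith

end PowEq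
namespace PowEq
variable {σ : Type*}

lemma edAux_of_ops (w : Option σ → Option σ → ℝ) (o : List (Op σ)) :
    EdAux w (src o) (tgt o) (cost w o) := by
  induction o with
  | nil => simpa [cost] using EdAux.nil (w := w)
  | cons op o ih =>
    cases op with
    | del a => simpa [src, tgt, cost, opCost] using EdAux.del a ih
    | ins b => simpa [src, tgt, cost, opCost] using EdAux.ins b ih
    | sub a b => simpa [src, tgt, cost, opCost] using EdAux.sub a b ih

lemma ops_of_edAux {w : Option σ → Option σ → ℝ} {X Y : List σ} {c : ℝ}
    (h : EdAux w X Y c) : ∃ o : List (Op σ), src o = X ∧ tgt o = Y ∧ cost w o = c := by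
  induction h with
  | nil => exact ⟨[], rfl, rfl, by simp [cost]⟩
  | del a _ ih =>
    obtain ⟨o, h1, h2, h3⟩ := ih
    exact ⟨.del a :: o, by simp [src, h1], by simp [tgt, h2],
      by simp [cost, opCost] at h3 ⊢; rw [h3]⟩
  | ins b _ ih =>
    obtain ⟨o, h1, h2, h3⟩ := ih
    exact ⟨.ins b :: o, by simp [src, h1], by simp [tgt, h2],
      by simp [cost, opCost] at h3 ⊢; rw [h3]⟩
  | sub a b _ ih =>
    obtain ⟨o, h1, h2, h3⟩ := ih
    exact ⟨.sub a b :: o, by simp [src, h1], by simp [tgt, h2],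
      by simp [cost, opCost] at h3 ⊢; rw [h3]⟩

lemma edAux_nonneg {w : Option σ → Option σ → ℝ} (hw : IsWeight w) {X Y : List σ} {c : ℝ}
    (h : EdAux w X Y c) : 0 ≤ c := by
  induction h with
  | nil => exact le_refl _
  | del a _ ih => have := hw.1 (some a) none; linarith
  | ins b _ ih => have := hw.1 none (some b); linarith
  | sub a b _ ih => have := hw.1 (some a) (some b); linarith

lemma edAux_nonempty (w : Option σ → Option σ → ℝ) (X Y : List σ) :
    ∃ c, EdAux w X Y c := by
  induction X with
  | nil =>
    induction Y with
    | nil => exact ⟨0, EdAux.nil⟩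
    | cons b Y ih => obtain ⟨c, hc⟩ := ih; exact ⟨_, EdAux.ins b hc⟩
  | cons a X ih => obtain ⟨c, hc⟩ := ih; exact ⟨_, EdAux.del a hc⟩

lemma ed_le {w : Option σ → Option σ → ℝ} (hw : IsWeight w) {X Y : List σ} {c : ℝ}
    (h : EdAux w X Y c) : ed w X Y ≤ c :=
  csInf_le ⟨0, fun _ hc' => edAux_nonneg hw hc'⟩ h

lemma exists_edAux_near {w : Option σ → Option σ → ℝ} (X Y : List σ) {ε : ℝ} (hε : 0 < ε) :
    ∃ c, EdAux w X Y c ∧ c < ed w X Y + ε := by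
  obtain ⟨c, hc, hlt⟩ := Real.lt_sInf_add_pos (s := {c | EdAux w X Y c})
    (edAux_nonempty w X Y) hε
  exact ⟨c, hc, hlt⟩

lemma split_src (o : List (Op σ)) (n : ℕ) (hn : n ≤ (src o).length) :
    ∃ p r, o = p ++ r ∧ (src p).length = n := by
  induction o generalizing n with
  | nil =>
    simp at hn
    exact ⟨[], [], rfl, by simp [hn]⟩
  | cons op o ih =>
    rcases Nat.eq_zero_or_pos n with rfl | hpos
    · exact ⟨[], op :: o, rfl, rfl⟩
    · cases op with
      | del a =>
        obtain ⟨p, r, h1, h2⟩ := ih (n - 1) (by simp [src] at hn; omega)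
        exact ⟨.del a :: p, r, by simp [h1], by simp [src, h2]; omega⟩
      | ins b =>
        obtain ⟨p, r, h1, h2⟩ := ih n (by simpa [src] using hn)
        exact ⟨.ins b :: p, r, by simp [h1], by simp [src, h2]⟩
      | sub a b =>
        obtain ⟨p, r, h1, h2⟩ := ih (n - 1) (by simp [src] at hn; omega)
        exact ⟨.sub a b :: p, r, by simp [h1], by simp [src, h2]; omega⟩

lemma split_tgt (o : List (Op σ)) (n : ℕ) (hn : n ≤ (tgt o).length) :
    ∃ p r, o = p ++ r ∧ (tgt p).length = n := by
  induction o generalizing n with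
  | nil =>
    simp at hn
    exact ⟨[], [], rfl, by simp [hn]⟩
  | cons op o ih =>
    rcases Nat.eq_zero_or_pos n with rfl | hpos
    · exact ⟨[], op :: o, rfl, rfl⟩
    · cases op with
      | ins b =>
        obtain ⟨p, r, h1, h2⟩ := ih (n - 1) (by simp [tgt] at hn; omega)
        exact ⟨.ins b :: p, r, by simp [h1], by simp [tgt, h2]; omega⟩
      | del a =>
        obtain ⟨p, r, h1, h2⟩ := ih n (by simpa [tgt] using hn)
        exact ⟨.del a :: p, r, by simp [h1], by simp [tgt, h2]⟩
      | sub a b =>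
        obtain ⟨p, r, h1, h2⟩ := ih (n - 1) (by simp [tgt] at hn; omega)
        exact ⟨.sub a b :: p, r, by simp [h1], by simp [tgt, h2]; omega⟩

lemma badCount_eq_zero {o : List (Op σ)} (h : ∀ op ∈ o, IsGood op) : badCount o = 0 := by
  induction o with
  | nil => rfl
  | cons op o ih =>
    simp only [badCount]
    rw [if_pos (h op (by simp))]
    simpa using ih fun x hx => h x (by simp [hx])

lemma good_all_matchOps {o : List (Op σ)} (h : ∀ op ∈ o, IsGood op) :
    ∃ R : List σ, o = matchOps R ∧ R.length = o.length := by
  induction o with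
  | nil => exact ⟨[], rfl, rfl⟩
  | cons op o ih =>
    obtain ⟨R, h1, h2⟩ := ih fun x hx => h x (by simp [hx])
    obtain ⟨a, rfl⟩ := h op (by simp)
    exact ⟨a :: R, by simp [matchOps, h1], by simp [h2]⟩

lemma first_bad (q : ℕ) (o : List (Op σ)) (h : ¬ ∀ op ∈ o.take q, IsGood op) :
    ∃ l₁ op l₂, o = l₁ ++ op :: l₂ ∧ (∀ x ∈ l₁, IsGood x) ∧ ¬ IsGood op ∧ l₁.length < q := by
  induction o generalizing q with
  | nil => simp at h
  | cons op o ih =>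
    rcases Nat.eq_zero_or_pos q with rfl | hpos
    · simp at h
    · obtain ⟨q', rfl⟩ : ∃ q', q = q' + 1 := ⟨q - 1, by omega⟩
      by_cases hop : IsGood op
      · have h' : ¬ ∀ x ∈ o.take q', IsGood x := by
          intro hall; apply h
          intro x hx
          simp [List.take_succ_cons] at hx
          rcases hx with rfl | hx
          · exact hop
          · exact hall x hx
        obtain ⟨l₁, op', l₂, h1, h2, h3, h4⟩ := ih q' h'
        refine ⟨op :: l₁, op', l₂, by simp [h1], ?_, h3, by simpa using h4⟩
        intro x hx
        rcases List.mem_cons.1 hx with rfl | hx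
        · exact hop
        · exact h2 x hx
      · exact ⟨[], op, o, rfl, by simp, hop, by simp⟩

lemma peel (q : ℕ) (hq : 1 ≤ q) :
    ∀ (b : ℕ) (o : List (Op σ)), badCount o ≤ b → q * (b + 1) ≤ (src o).length →
    ∃ u R v, o = u ++ matchOps R ++ v ∧ R.length = q ∧ (src u).length ≤ q * badCount u := by
  intro b
  induction b with
  | zero =>
    intro o hb hlen
    by_cases h : ∀ op ∈ o.take q, IsGood op
    · have hqlen : q ≤ o.length :=
        le_trans (by simpa using hlen) (src_length_le_length o)
      obtain ⟨R, hR, hRlen⟩ := good_all_matchOps h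
      refine ⟨[], R, o.drop q, ?_, ?_, by simp [badCount]⟩
      · rw [← hR]; simp [List.take_append_drop]
      · rw [hRlen, List.length_take]; omega
    · obtain ⟨l₁, op, l₂, h1, h2, h3, h4⟩ := first_bad q o h
      exfalso
      have : badCount o = badCount l₁ + ((if IsGood op then 0 else 1) + badCount l₂) := by
        rw [h1, badCount_append]; rfl
      rw [if_neg h3, badCount_eq_zero h2] at this
      omega
  | succ b ihb =>
    intro o hb hlen
    by_cases h : ∀ op ∈ o.take q, IsGood op
    · have hqlen : q ≤ o.length := by
        have h5 := src_length_le_length o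
        have h6 : q ≤ (src o).length :=
          le_trans (Nat.le_mul_of_pos_right q (by omega)) hlen
        omega
      obtain ⟨R, hR, hRlen⟩ := good_all_matchOps h
      refine ⟨[], R, o.drop q, ?_, ?_, by simp [badCount]⟩
      · rw [← hR]; simp [List.take_append_drop]
      · rw [hRlen, List.length_take]; omega
    · obtain ⟨l₁, op, l₂, h1, h2, h3, h4⟩ := first_bad q o h
      have hbc : badCount o = 1 + badCount l₂ := by
        have : badCount o = badCount l₁ + ((if IsGood op then 0 else 1) + badCount l₂) := by
          rw [h1, badCount_append]; rfl
        rw [if_neg h3, badCount_eq_zero h2] at this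
        omega
      have hlen₂ : q * (b + 1) ≤ (src l₂).length := by
        have hsplit : (src o).length = (src l₁).length + (src (op :: l₂)).length := by
          rw [h1, src_append]; simp
        have h5 : (src l₁).length ≤ l₁.length := src_length_le_length l₁
        have h6 : (src (op :: l₂)).length ≤ 1 + (src l₂).length := by
          cases op <;> simp [src] <;> omega
        have := hlen
        nlinarith [hsplit, h4, h5, h6]
      obtain ⟨u', R, v, hu1, hu2, hu3⟩ := ihb l₂ (by omega) hlen₂
      refine ⟨l₁ ++ op :: u', R, v, by simp [h1, hu1], hu2, ?_⟩
      have hbcu : badCount (l₁ ++ op :: u') = 1 + badCount u' := by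
        rw [badCount_append, badCount_eq_zero h2]
        simp [badCount, if_neg h3]
      rw [hbcu, src_append]
      have h5 : (src l₁).length ≤ l₁.length := src_length_le_length l₁
      have h6 : (src (op :: u')).length ≤ 1 + (src u').length := by
        cases op <;> simp [src] <;> omega
      rw [Nat.mul_add, Nat.mul_one]
      have hd : (src l₁ ++ src (op :: u')).length
          = (src l₁).length + (src (op :: u')).length := by simp
      rw [hd]
      omega

end PowEq
namespace PowEq
variable {σ : Type*}

lemma listPow_succ_left (Q : List σ) (m : ℕ) : listPow Q (m + 1) = Q ++ listPow Q m := by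
  simp [listPow, List.replicate_succ]

lemma listPow_succ_right (Q : List σ) (m : ℕ) : listPow Q (m + 1) = listPow Q m ++ Q := by
  simp [listPow, List.replicate_succ']

lemma listPow_length (Q : List σ) (m : ℕ) : (listPow Q m).length = m * Q.length := by
  induction m with
  | zero => simp [listPow]
  | succ m ih => rw [listPow_succ_left]; simp [ih]; ring

/-- The splice lemma: cutting a power string inside the periodic region at a
full-period window allows deleting or duplicating that window. -/
lemma splice {Q : List σ} {f t : ℕ} {C D Y₁ R Y₂ : List σ}
    (ht : t + Q.length ≤ f * Q.length)
    (hY : Y₁ ++ R ++ Y₂ = C ++ listPow Q f ++ D)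
    (hY₁ : Y₁.length = C.length + t)
    (hR : R.length = Q.length) :
    Y₁ ++ R ++ R ++ Y₂ = C ++ listPow Q (f + 1) ++ D ∧
    ∀ m, f = m + 1 → Y₁ ++ Y₂ = C ++ listPow Q m ++ D := by
  have hlenP : (listPow Q f).length = f * Q.length := listPow_length Q f
  have htf : t ≤ f * Q.length := by omega
  rw [List.append_assoc, List.append_assoc] at hY
  have hY₁' : Y₁ = C ++ (listPow Q f).take t := by
    have h1 : Y₁ = (Y₁ ++ (R ++ Y₂)).take Y₁.length := by simp
    rw [h1, hY, hY₁, List.take_length_add_append, List.take_append_of_le_length (by omega)]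
  have hdrop : R ++ Y₂ = (listPow Q f).drop t ++ D := by
    have h1 : R ++ Y₂ = (Y₁ ++ (R ++ Y₂)).drop Y₁.length := by simp
    rw [h1, hY, hY₁, List.drop_length_add_append, List.drop_append_of_le_length (by omega)]
  have hR' : R = ((listPow Q f).drop t).take Q.length := by
    have h1 : R = (R ++ Y₂).take Q.length := by rw [← hR]; simp
    rw [h1, hdrop,
      List.take_append_of_le_length (by rw [List.length_drop, hlenP]; omega)]
  have hY₂' : Y₂ = (listPow Q f).drop (t + Q.length) ++ D := by
    have h1 : Y₂ = (R ++ Y₂).drop Q.length := by rw [← hR]; simp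
    rw [h1, hdrop,
      List.drop_append_of_le_length (by rw [List.length_drop, hlenP]; omega),
      List.drop_drop]
  constructor
  · -- duplication
    have key : (listPow Q f).take (t + Q.length) ++ (listPow Q f).drop t
        = listPow Q (f + 1) := by
      have e1 : (listPow Q f).take (t + Q.length)
          = (listPow Q (f + 1)).take (t + Q.length) := by
        rw [listPow_succ_right, List.take_append_of_le_length (by omega)]
      have e2 : (listPow Q f).drop t = (listPow Q (f + 1)).drop (Q.length + t) := by
        rw [listPow_succ_left, List.drop_length_add_append]
      rw [e1, e2, Nat.add_comm Q.length t, List.take_append_drop]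
    have h2 : (listPow Q f).drop (t + Q.length) = ((listPow Q f).drop t).drop Q.length := by
      rw [List.drop_drop]
    rw [hY₁', hR', hY₂', h2]
    calc (C ++ (listPow Q f).take t) ++ ((listPow Q f).drop t).take Q.length
          ++ ((listPow Q f).drop t).take Q.length
          ++ (((listPow Q f).drop t).drop Q.length ++ D)
        = C ++ (((listPow Q f).take t ++ ((listPow Q f).drop t).take Q.length)
            ++ (((listPow Q f).drop t).take Q.length ++ ((listPow Q f).drop t).drop Q.length))
            ++ D := by simp only [List.append_assoc]
      _ = C ++ ((listPow Q f).take (t + Q.length) ++ (listPow Q f).drop t) ++ D := by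
          rw [List.take_append_drop, ← List.take_add]
      _ = C ++ listPow Q (f + 1) ++ D := by rw [key]
  · -- deletion
    rintro m rfl
    have hmq : (m + 1) * Q.length = m * Q.length + Q.length := by ring
    have key : (listPow Q (m + 1)).take t ++ (listPow Q (m + 1)).drop (t + Q.length)
        = listPow Q m := by
      have e1 : (listPow Q (m + 1)).take t = (listPow Q m).take t := by
        rw [listPow_succ_right, List.take_append_of_le_length (by rw [listPow_length]; omega)]
      have e2 : (listPow Q (m + 1)).drop (t + Q.length) = (listPow Q m).drop t := by
        rw [listPow_succ_left, Nat.add_comm t Q.length, List.drop_length_add_append]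
      rw [e1, e2, List.take_append_drop]
    rw [hY₁', hY₂']
    calc (C ++ (listPow Q (m + 1)).take t) ++ ((listPow Q (m + 1)).drop (t + Q.length) ++ D)
        = C ++ ((listPow Q (m + 1)).take t ++ (listPow Q (m + 1)).drop (t + Q.length)) ++ D := by
          simp only [List.append_assoc]
      _ = C ++ listPow Q m ++ D := by rw [key]

end PowEq
namespace PowEq
variable {σ : Type*}

lemma arith_main {q k b s f : ℕ} (hq : 1 ≤ q) (hk : 1 ≤ k) (hb : b ≤ k) (hs : s ≤ 2 * k)
    (hf : 4 * k ≤ f) : s + q * b + q ≤ f * q := by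
  have h1 : q * b ≤ q * k := Nat.mul_le_mul_left q hb
  have a1 : k ≤ k * q := Nat.le_mul_of_pos_right k (by omega)
  have a2 : q ≤ q * k := Nat.le_mul_of_pos_right q (by omega)
  have h3 : 2 * (k * q) + q * k + q * k = (4 * k) * q := by ring
  have h4 : (4 * k) * q ≤ f * q := Nat.mul_le_mul_right q hf
  omega

lemma extract {Q A B C D : List σ} {f k : ℕ} (hk : 1 ≤ k) (hq : 1 ≤ Q.length)
    (hf : 4 * k ≤ f) {ops : List (Op σ)}
    (hsrc : src ops = A ++ listPow Q f ++ B) (htgt : tgt ops = C ++ listPow Q f ++ D)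
    (hbad : badCount ops ≤ k)
    (hAC : A.length ≤ C.length + k) (hCA : C.length ≤ A.length + k) :
    ∃ O₁ R O₂ t t', ops = O₁ ++ matchOps R ++ O₂ ∧ R.length = Q.length ∧
      (src O₁).length = A.length + t ∧ (tgt O₁).length = C.length + t' ∧
      t + Q.length ≤ f * Q.length ∧ t' + Q.length ≤ f * Q.length := by
  have hsrclen : (src ops).length = A.length + f * Q.length + B.length := by
    rw [hsrc]; simp [listPow_length]; ring
  have htgtlen : (tgt ops).length = C.length + f * Q.length + D.length := by
    rw [htgt]; simp [listPow_length]; ring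
  -- Step A: split at src position |A|
  obtain ⟨p₀, r₀, hops₀, hp₀⟩ := split_src ops A.length (by omega)
  have hbad₀ : badCount p₀ + badCount r₀ ≤ k := by
    rw [hops₀, badCount_append] at hbad; exact hbad
  -- Step B: find pre, r with both coordinates past the region starts
  obtain ⟨pre, r, hops₁, α, β, hα, hβ, hbound⟩ :
      ∃ pre r, ops = pre ++ r ∧ ∃ α β, (src pre).length = A.length + α ∧
        (tgt pre).length = C.length + β ∧ α + β + badCount r ≤ 2 * k := by
    by_cases h : C.length ≤ (tgt p₀).length
    · refine ⟨p₀, r₀, hops₀, 0, (tgt p₀).length - C.length, by omega, by omega, ?_⟩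
      have h1 : (tgt p₀).length ≤ (src p₀).length + badCount p₀ := tgt_length_le p₀
      omega
    · have hm : C.length - (tgt p₀).length ≤ (tgt r₀).length := by
        have h1 : (tgt p₀).length + (tgt r₀).length = (tgt ops).length := by
          rw [hops₀, tgt_append]; simp
        omega
      obtain ⟨p₁, r, hr₀, hp₁⟩ := split_tgt r₀ (C.length - (tgt p₀).length) hm
      have hbad₁ : badCount p₀ + badCount p₁ + badCount r ≤ k := by
        rw [hr₀, badCount_append] at hbad₀; omega
      refine ⟨p₀ ++ p₁, r, by rw [hops₀, hr₀, List.append_assoc], (src p₁).length, 0,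
        ?_, ?_, ?_⟩
      · rw [src_append]; simp [hp₀]
      · rw [tgt_append]; simp [hp₁]; omega
      · have h1 : (src p₁).length ≤ (tgt p₁).length + badCount p₁ := src_length_le p₁
        have h2 : (src p₀).length ≤ (tgt p₀).length + badCount p₀ := src_length_le p₀
        rw [hp₁] at h1
        rw [hp₀] at h2
        omega
  -- Step C: peel the remainder
  have hbadr : badCount r ≤ k := by
    rw [hops₁, badCount_append] at hbad; omega
  have hsrcr : (src pre).length + (src r).length = (src ops).length := by
    rw [hops₁, src_append]; simp
  have hpeellen : Q.length * (badCount r + 1) ≤ (src r).length := by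
    have harith : α + Q.length * badCount r + Q.length ≤ f * Q.length :=
      arith_main hq hk hbadr (by omega) hf
    have hexp : Q.length * (badCount r + 1) = Q.length * badCount r + Q.length := by ring
    omega
  obtain ⟨u, R, v, hruv, hRlen, hulen⟩ := peel Q.length hq (badCount r) r (le_refl _) hpeellen
  have hbadu : badCount u ≤ badCount r := by
    rw [hruv, badCount_append, badCount_append] at *; omega
  refine ⟨pre ++ u, R, v, α + (src u).length, β + (tgt u).length, ?_, hRlen, ?_, ?_, ?_, ?_⟩
  · rw [hops₁, hruv]; simp [List.append_assoc]
  · rw [src_append]; simp [hα]; omega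
  · rw [tgt_append]; simp [hβ]; omega
  · -- t := α + |src u|
    have harith : (α + (src u).length) + Q.length ≤ f * Q.length := by
      have h1 : (src u).length ≤ Q.length * badCount u := hulen
      have h2 : Q.length * badCount u ≤ Q.length * badCount r :=
        Nat.mul_le_mul_left _ hbadu
      have := arith_main (s := α) (b := badCount r) hq hk hbadr (by omega) hf
      omega
    omega
  · -- t' := β + |tgt u|
    have h1 : (tgt u).length ≤ (src u).length + badCount u := tgt_length_le u
    have h2 : Q.length * badCount u ≤ Q.length * badCount r :=
      Nat.mul_le_mul_left _ hbadu
    have := arith_main (s := β + badCount u) (b := badCount r) hq hk hbadr (by omega) hf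
    omega

end PowEq
namespace PowEq
variable {σ : Type*}

lemma core {w : Option σ → Option σ → ℝ} (hw : Normalized w) {Q A B C D : List σ} {f k : ℕ}
    (hk : 1 ≤ k) (hq : 1 ≤ Q.length) (hf : 4 * k ≤ f)
    (hAC : A.length ≤ C.length + k) (hCA : C.length ≤ A.length + k) {c : ℝ}
    (h : EdAux w (A ++ listPow Q f ++ B) (C ++ listPow Q f ++ D) c) (hc : c < k + 1) :
    EdAux w (A ++ listPow Q (f + 1) ++ B) (C ++ listPow Q (f + 1) ++ D) c ∧
    ∀ m, f = m + 1 → EdAux w (A ++ listPow Q m ++ B) (C ++ listPow Q m ++ D) c := by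
  obtain ⟨ops, hsrc, htgt, hcost⟩ := ops_of_edAux h
  have hbadR : (badCount ops : ℝ) ≤ c := hcost ▸ badCount_le_cost w hw ops
  have hbad : badCount ops ≤ k := by
    have h1 : (badCount ops : ℝ) < (k : ℝ) + 1 := lt_of_le_of_lt hbadR hc
    have h2 : badCount ops < k + 1 := by exact_mod_cast h1
    omega
  obtain ⟨O₁, R, O₂, t, t', heq, hR, hst, htt, ht, ht'⟩ :=
    extract hk hq hf hsrc htgt hbad hAC hCA
  have hsrc' : src O₁ ++ R ++ src O₂ = A ++ listPow Q f ++ B := by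
    rw [heq, src_append, src_append, src_matchOps] at hsrc
    simpa [List.append_assoc] using hsrc
  have htgt' : tgt O₁ ++ R ++ tgt O₂ = C ++ listPow Q f ++ D := by
    rw [heq, tgt_append, tgt_append, tgt_matchOps] at htgt
    simpa [List.append_assoc] using htgt
  have hsp := splice ht hsrc' hst hR
  have htp := splice ht' htgt' htt hR
  have hcost' : cost w O₁ + cost w O₂ = c := by
    rw [heq, cost_append, cost_append, cost_matchOps w hw.1 R] at hcost
    linarith
  constructor
  · have h1 := edAux_of_ops w (O₁ ++ (matchOps R ++ (matchOps R ++ O₂)))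
    have e1 : src (O₁ ++ (matchOps R ++ (matchOps R ++ O₂))) = A ++ listPow Q (f + 1) ++ B := by
      simp only [src_append, src_matchOps]
      simpa [List.append_assoc] using hsp.1
    have e2 : tgt (O₁ ++ (matchOps R ++ (matchOps R ++ O₂))) = C ++ listPow Q (f + 1) ++ D := by
      simp only [tgt_append, tgt_matchOps]
      simpa [List.append_assoc] using htp.1
    have e3 : cost w (O₁ ++ (matchOps R ++ (matchOps R ++ O₂))) = c := by
      rw [cost_append, cost_append, cost_append, cost_matchOps w hw.1]
      linarith
    rw [e1, e2, e3] at h1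
    exact h1
  · rintro m rfl
    have h1 := edAux_of_ops w (O₁ ++ O₂)
    have e1 : src (O₁ ++ O₂) = A ++ listPow Q m ++ B := by
      rw [src_append]
      simpa [List.append_assoc] using hsp.2 m rfl
    have e2 : tgt (O₁ ++ O₂) = C ++ listPow Q m ++ D := by
      rw [tgt_append]
      simpa [List.append_assoc] using htp.2 m rfl
    have e3 : cost w (O₁ ++ O₂) = c := by rw [cost_append]; linarith
    rw [e1, e2, e3] at h1
    exact h1

lemma le_of_forall_lt_add {a b : ℝ} (h : ∀ ε : ℝ, 0 < ε → ε < 1 → a < b + ε) : a ≤ b := by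
  by_contra hab
  push_neg at hab
  rcases lt_or_ge (a - b) 1 with h1 | h1
  · have := h (a - b) (by linarith) h1; linarith
  · have := h (1/2) (by norm_num) (by norm_num); linarith

lemma step_up {w : Option σ → Option σ → ℝ} (hw : Normalized w) {Q A B C D : List σ}
    {f k : ℕ} (hk : 1 ≤ k) (hq : 1 ≤ Q.length) (hf : 4 * k ≤ f)
    (hAC : A.length ≤ C.length + k) (hCA : C.length ≤ A.length + k)
    (hE : ed w (A ++ listPow Q f ++ B) (C ++ listPow Q f ++ D) ≤ (k : ℝ)) :
    ed w (A ++ listPow Q (f + 1) ++ B) (C ++ listPow Q (f + 1) ++ D) ≤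
      ed w (A ++ listPow Q f ++ B) (C ++ listPow Q f ++ D) := by
  apply le_of_forall_lt_add
  intro ε hε hε1
  obtain ⟨c, hc, hlt⟩ := exists_edAux_near (w := w)
    (A ++ listPow Q f ++ B) (C ++ listPow Q f ++ D) hε
  have hck : c < (k : ℝ) + 1 := by linarith
  have h2 := (core hw hk hq hf hAC hCA hc hck).1
  exact lt_of_le_of_lt (ed_le hw.1 h2) hlt

lemma step_down {w : Option σ → Option σ → ℝ} (hw : Normalized w) {Q A B C D : List σ}
    {f k : ℕ} (hk : 1 ≤ k) (hq : 1 ≤ Q.length) (hf : 4 * k ≤ f)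
    (hAC : A.length ≤ C.length + k) (hCA : C.length ≤ A.length + k)
    (hE : ed w (A ++ listPow Q (f + 1) ++ B) (C ++ listPow Q (f + 1) ++ D) ≤ (k : ℝ)) :
    ed w (A ++ listPow Q f ++ B) (C ++ listPow Q f ++ D) ≤
      ed w (A ++ listPow Q (f + 1) ++ B) (C ++ listPow Q (f + 1) ++ D) := by
  apply le_of_forall_lt_add
  intro ε hε hε1
  obtain ⟨c, hc, hlt⟩ := exists_edAux_near (w := w)
    (A ++ listPow Q (f + 1) ++ B) (C ++ listPow Q (f + 1) ++ D) hε
  have hck : c < (k : ℝ) + 1 := by linarith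
  have h2 := (core hw hk hq (show 4 * k ≤ f + 1 by omega) hAC hCA hc hck).2 f rfl
  exact lt_of_le_of_lt (ed_le hw.1 h2) hlt

lemma edK_step {w : Option σ → Option σ → ℝ} (hw : Normalized w) {Q A B C D : List σ}
    {f k : ℕ} (hk : 1 ≤ k) (hq : 1 ≤ Q.length) (hf : 4 * k ≤ f)
    (hAC : A.length ≤ C.length + k) (hCA : C.length ≤ A.length + k) :
    edK w (k : ℝ) (A ++ listPow Q f ++ B) (C ++ listPow Q f ++ D) =
      edK w (k : ℝ) (A ++ listPow Q (f + 1) ++ B) (C ++ listPow Q (f + 1) ++ D) := by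
  by_cases h : ed w (A ++ listPow Q f ++ B) (C ++ listPow Q f ++ D) ≤ (k : ℝ)
  · have h2 := step_up hw hk hq hf hAC hCA h
    have h2k : ed w (A ++ listPow Q (f + 1) ++ B) (C ++ listPow Q (f + 1) ++ D) ≤ (k : ℝ) :=
      le_trans h2 h
    have h3 := step_down hw hk hq hf hAC hCA h2k
    have heq : ed w (A ++ listPow Q f ++ B) (C ++ listPow Q f ++ D) =
        ed w (A ++ listPow Q (f + 1) ++ B) (C ++ listPow Q (f + 1) ++ D) :=
      le_antisymm h3 h2
    rw [edK, edK, heq]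
  · have h' : ¬ ed w (A ++ listPow Q (f + 1) ++ B) (C ++ listPow Q (f + 1) ++ D) ≤ (k : ℝ) :=
      fun hh => h (le_trans (step_down hw hk hq hf hAC hCA hh) hh)
    rw [edK, edK, if_neg h, if_neg h']

lemma edK_chain {w : Option σ → Option σ → ℝ} (hw : Normalized w) {Q A B C D : List σ}
    {k : ℕ} (hk : 1 ≤ k) (hq : 1 ≤ Q.length)
    (hAC : A.length ≤ C.length + k) (hCA : C.length ≤ A.length + k) (n : ℕ) :
    edK w (k : ℝ) (A ++ listPow Q (4 * k) ++ B) (C ++ listPow Q (4 * k) ++ D) =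
      edK w (k : ℝ) (A ++ listPow Q (4 * k + n) ++ B) (C ++ listPow Q (4 * k + n) ++ D) := by
  induction n with
  | zero => rfl
  | succ n ih =>
    rw [ih, show 4 * k + (n + 1) = (4 * k + n) + 1 from rfl]
    exact edK_step hw hk hq (by omega) hAC hCA

lemma occ_decomp {P X : List σ} {p : ℕ} (h : OccursAt P X p) :
    X = X.take p ++ P ++ X.drop (p + P.length) := by
  obtain ⟨h1, h2⟩ := h
  have h3 : (X.drop p).take P.length = P := by
    have : p + P.length - p = P.length := by omega
    rw [← this]
    exact h2
  calc X = X.take p ++ X.drop p := (List.take_append_drop p X).symm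
    _ = X.take p ++ ((X.drop p).take P.length ++ (X.drop p).drop P.length) := by
        rw [List.take_append_drop, List.take_append_drop]
        exact (List.take_append_drop p X).symm
    _ = X.take p ++ P ++ X.drop (p + P.length) := by
        rw [h3, List.drop_drop, List.append_assoc]

end PowEq
/-- For `k ≥ 1` and `e, e' ≥ 4k`, the strings `Q^e` and `Q^{e'}` are
`ed^w_{≤k}`-equivalent for every normalized weight function `w`. -/
theorem power_equivalence (k : ℕ) (hk : 1 ≤ k) (Q : List σ) (e e' : ℕ)
    (he : 4 * k ≤ e) (he' : 4 * k ≤ e')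
    (w : Option σ → Option σ → ℝ) (hw : Normalized w) :
    EdEquiv w k (listPow Q e) (listPow Q e') := by
  intro X Y pX pY hX hY hpp
  rcases Nat.eq_zero_or_pos Q.length with hq0 | hq
  · have hQnil : Q = [] := List.length_eq_zero_iff.mp hq0
    subst hQnil
    have hnil : ∀ m, listPow ([] : List σ) m = [] := fun m => by simp [listPow]
    simp [hnil, List.take_append_drop]
  · have hXd := PowEq.occ_decomp hX
    have hYd := PowEq.occ_decomp hY
    have hlenA : (X.take pX).length = pX := by
      have := hX.1
      rw [List.length_take]
      omega
    have hlenC : (Y.take pY).length = pY := by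
      have := hY.1
      rw [List.length_take]
      omega
    rw [abs_le] at hpp
    have hAC : (X.take pX).length ≤ (Y.take pY).length + k := by
      rw [hlenA, hlenC]; omega
    have hCA : (Y.take pY).length ≤ (X.take pX).length + k := by
      rw [hlenA, hlenC]; omega
    obtain ⟨n, rfl⟩ : ∃ n, e = 4 * k + n := ⟨e - 4 * k, by omega⟩
    obtain ⟨n', rfl⟩ : ∃ n', e' = 4 * k + n' := ⟨e' - 4 * k, by omega⟩
    conv_lhs => rw [hXd, hYd]
    rw [← PowEq.edK_chain hw hk hq hAC hCA n, PowEq.edK_chain hw hk hq hAC hCA n']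
end

section
/- Let k ≥ 1 and let P, P' be strings of length at least 42k³ such that P[0..21k³) = P'[0..21k³) and P[|P|−21k³..|P|) = P'[|P'|−21k³..|P'|), and both of these shared prefix and suffix avoid k-periodicity. Then P and P' are ed^w_{≤k}-equivalent for every normalized weight function w. -/
variable {σ : Type*}

section AuxDev

open scoped Classical

/-- Elementary edit operations. -/
inductive EOp (σ : Type*) where
  | del (a : σ)
  | ins (b : σ)
  | sub (a b : σ)

namespace EOp

def xs : EOp σ → List σ
  | del a => [a]
  | ins _ => []
  | sub a _ => [a]

def ys : EOp σ → List σ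
  | del _ => []
  | ins b => [b]
  | sub _ b => [b]

noncomputable def cost (w : Option σ → Option σ → ℝ) : EOp σ → ℝ
  | del a => w (some a) none
  | ins b => w none (some b)
  | sub a b => w (some a) (some b)

noncomputable def isM : EOp σ → Bool
  | sub a b => decide (a = b)
  | _ => false

lemma isM_iff {o : EOp σ} : o.isM = true ↔ ∃ a, o = .sub a a := by
  cases o with
  | del a => simp [isM]
  | ins b => simp [isM]
  | sub a b =>
    simp only [isM, decide_eq_true_eq]
    constructor
    · rintro rfl; exact ⟨a, rfl⟩
    · rintro ⟨c, h⟩; cases h; rfl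

end EOp

variable {w : Option σ → Option σ → ℝ}

def inX (l : List (EOp σ)) : List σ := l.flatMap EOp.xs
def inY (l : List (EOp σ)) : List σ := l.flatMap EOp.ys

noncomputable def opsCost (w : Option σ → Option σ → ℝ) (l : List (EOp σ)) : ℝ :=
  (l.map (EOp.cost w)).sum

noncomputable def nmc (l : List (EOp σ)) : ℕ := l.countP (fun o => !o.isM)

@[simp] lemma inX_nil : inX ([] : List (EOp σ)) = [] := rfl
@[simp] lemma inY_nil : inY ([] : List (EOp σ)) = [] := rfl
@[simp] lemma inX_cons (o : EOp σ) (l : List (EOp σ)) : inX (o :: l) = o.xs ++ inX l := by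
  simp [inX]
@[simp] lemma inY_cons (o : EOp σ) (l : List (EOp σ)) : inY (o :: l) = o.ys ++ inY l := by
  simp [inY]
@[simp] lemma inX_append (l₁ l₂ : List (EOp σ)) : inX (l₁ ++ l₂) = inX l₁ ++ inX l₂ := by
  simp [inX]
@[simp] lemma inY_append (l₁ l₂ : List (EOp σ)) : inY (l₁ ++ l₂) = inY l₁ ++ inY l₂ := by
  simp [inY]
@[simp] lemma opsCost_nil : opsCost w [] = 0 := by simp [opsCost]
@[simp] lemma opsCost_cons (o : EOp σ) (l : List (EOp σ)) :
    opsCost w (o :: l) = o.cost w + opsCost w l := by simp [opsCost]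
@[simp] lemma opsCost_append (l₁ l₂ : List (EOp σ)) :
    opsCost w (l₁ ++ l₂) = opsCost w l₁ + opsCost w l₂ := by simp [opsCost]
lemma nmc_append (l₁ l₂ : List (EOp σ)) : nmc (l₁ ++ l₂) = nmc l₁ + nmc l₂ :=
  List.countP_append
@[simp] lemma nmc_nil : nmc ([] : List (EOp σ)) = 0 := rfl

lemma edAux_ops (l : List (EOp σ)) : EdAux w (inX l) (inY l) (opsCost w l) := by
  induction l with
  | nil => simpa using EdAux.nil
  | cons o l ih =>
    cases o with
    | del a => simpa [EOp.xs, EOp.ys, EOp.cost] using EdAux.del a ih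
    | ins b => simpa [EOp.xs, EOp.ys, EOp.cost] using EdAux.ins b ih
    | sub a b => simpa [EOp.xs, EOp.ys, EOp.cost] using EdAux.sub a b ih

lemma ops_of_edAux {X Y : List σ} {c : ℝ} (h : EdAux w X Y c) :
    ∃ l : List (EOp σ), inX l = X ∧ inY l = Y ∧ opsCost w l = c := by
  induction h with
  | nil => exact ⟨[], rfl, rfl, by simp⟩
  | @del X Y c a _ ih =>
    obtain ⟨l, h1, h2, h3⟩ := ih
    exact ⟨.del a :: l, by simp [h1, EOp.xs], by simp [h2, EOp.ys], by simp [h3, EOp.cost]⟩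
  | @ins X Y c b _ ih =>
    obtain ⟨l, h1, h2, h3⟩ := ih
    exact ⟨.ins b :: l, by simp [h1, EOp.xs], by simp [h2, EOp.ys], by simp [h3, EOp.cost]⟩
  | @sub X Y c a b _ ih =>
    obtain ⟨l, h1, h2, h3⟩ := ih
    exact ⟨.sub a b :: l, by simp [h1, EOp.xs], by simp [h2, EOp.ys], by simp [h3, EOp.cost]⟩

lemma opsCost_nonneg (hw : IsWeight w) (l : List (EOp σ)) : 0 ≤ opsCost w l := by
  induction l with
  | nil => simp
  | cons o l ih =>
    simp only [opsCost_cons]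
    have : 0 ≤ o.cost w := by cases o <;> exact hw.1 _ _
    linarith

lemma nmc_le_opsCost (hw : Normalized w) (l : List (EOp σ)) : (nmc l : ℝ) ≤ opsCost w l := by
  induction l with
  | nil => simp [nmc]
  | cons o l ih =>
    have hcnt : nmc (o :: l) = nmc l + (if o.isM then 0 else 1) := by
      simp only [nmc, List.countP_cons]
      cases h : o.isM <;> simp [h]
    rw [hcnt]
    have hco : (if o.isM then (0:ℝ) else 1) ≤ o.cost w := by
      cases o with
      | del a => simpa [EOp.isM, EOp.cost] using hw.2 (some a) none (by simp)
      | ins b => simpa [EOp.isM, EOp.cost] using hw.2 none (some b) (by simp)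
      | sub a b =>
        by_cases hab : a = b
        · subst hab
          simp only [EOp.isM, EOp.cost, decide_eq_true_eq, if_pos rfl]
          exact le_of_eq (hw.1.2 (some a)).symm
        · have := hw.2 (some a) (some b) (by simpa using hab)
          simp [EOp.isM, EOp.cost, hab, this]
    push_cast
    simp only [opsCost_cons]
    split_ifs at hco ⊢ <;> linarith

lemma length_inX_le (l : List (EOp σ)) : (inX l).length ≤ l.length := by
  induction l with
  | nil => simp
  | cons o l ih => cases o <;> simp [EOp.xs] <;> omega

lemma inXY_diff (l : List (EOp σ)) :
    ((inX l).length : ℤ) - (inY l).length ≤ nmc l ∧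
      ((inY l).length : ℤ) - (inX l).length ≤ nmc l := by
  induction l with
  | nil => simp
  | cons o l ih =>
    have hcnt : nmc (o :: l) = nmc l + (if o.isM then 0 else 1) := by
      simp only [nmc, List.countP_cons]
      cases h : o.isM <;> simp [h]
    cases o with
    | del a => simp only [inX_cons, inY_cons, EOp.xs, EOp.ys, hcnt, EOp.isM] at *; simp; push_cast; omega
    | ins b => simp only [inX_cons, inY_cons, EOp.xs, EOp.ys, hcnt, EOp.isM] at *; simp; push_cast; omega
    | sub a b => simp only [inX_cons, inY_cons, EOp.xs, EOp.ys, hcnt] at *; simp; push_cast; split_ifs <;> push_cast <;> omega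

lemma allM_len {l : List (EOp σ)} (h : ∀ o ∈ l, o.isM = true) :
    (inX l).length = l.length ∧ (inY l).length = l.length := by
  induction l with
  | nil => simp
  | cons o l ih =>
    obtain ⟨a, rfl⟩ := EOp.isM_iff.mp (h o (by simp))
    have := ih (fun o ho => h o (by simp [ho]))
    simp [EOp.xs, EOp.ys]
    omega

def matchOps (Z : List σ) : List (EOp σ) := Z.map (fun a => .sub a a)

@[simp] lemma inX_matchOps (Z : List σ) : inX (matchOps Z) = Z := by
  induction Z with
  | nil => rfl
  | cons a Z ih => simp [matchOps, EOp.xs] at *; exact ih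

@[simp] lemma inY_matchOps (Z : List σ) : inY (matchOps Z) = Z := by
  induction Z with
  | nil => rfl
  | cons a Z ih => simp [matchOps, EOp.ys] at *; exact ih

lemma opsCost_matchOps (hw : IsWeight w) (Z : List σ) : opsCost w (matchOps Z) = 0 := by
  induction Z with
  | nil => rfl
  | cons a Z ih => simp [matchOps, EOp.cost, hw.2] at *; exact ih

@[simp] lemma inX_mapDel (Z : List σ) : inX (Z.map EOp.del) = Z := by
  induction Z with
  | nil => rfl
  | cons a Z ih => simp [EOp.xs] at *; exact ih

@[simp] lemma inX_mapIns (Z : List σ) : inX (Z.map EOp.ins) = [] := by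
  induction Z with
  | nil => rfl
  | cons a Z ih => simp [EOp.xs] at *; exact ih

@[simp] lemma inY_mapDel (Z : List σ) : inY (Z.map EOp.del) = [] := by
  induction Z with
  | nil => rfl
  | cons a Z ih => simp [EOp.ys] at *; exact ih

@[simp] lemma inY_mapIns (Z : List σ) : inY (Z.map EOp.ins) = Z := by
  induction Z with
  | nil => rfl
  | cons a Z ih => simp [EOp.ys] at *; exact ih

lemma edAux_nonneg (hw : IsWeight w) {X Y : List σ} {c : ℝ} (h : EdAux w X Y c) : 0 ≤ c := by
  induction h with
  | nil => exact le_refl 0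
  | del a _ ih => have := hw.1 (some a) none; linarith
  | ins b _ ih => have := hw.1 none (some b); linarith
  | sub a b _ ih => have := hw.1 (some a) (some b); linarith

lemma costs_bddBelow (hw : IsWeight w) (X Y : List σ) : BddBelow {c | EdAux w X Y c} :=
  ⟨0, fun _ hc => edAux_nonneg hw hc⟩

lemma costs_nonempty (w : Option σ → Option σ → ℝ) (X Y : List σ) :
    {c | EdAux w X Y c}.Nonempty := by
  refine ⟨opsCost w (X.map EOp.del ++ Y.map EOp.ins), ?_⟩
  have := edAux_ops (w := w) (X.map EOp.del ++ Y.map EOp.ins)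
  simpa using this

lemma ed_le_ops (hw : IsWeight w) {l : List (EOp σ)} {X Y : List σ}
    (h1 : inX l = X) (h2 : inY l = Y) : ed w X Y ≤ opsCost w l := by
  apply csInf_le (costs_bddBelow hw X Y)
  have := edAux_ops (w := w) l
  rw [h1, h2] at this
  exact this

lemma ed_nonneg (hw : IsWeight w) (X Y : List σ) : 0 ≤ ed w X Y :=
  le_csInf (costs_nonempty w X Y) (fun _ hc => edAux_nonneg hw hc)

lemma costs_finite (w : Option σ → Option σ → ℝ) :
    ∀ (n : ℕ) (X Y : List σ), X.length + Y.length ≤ n → {c | EdAux w X Y c}.Finite := by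
  intro n
  induction n with
  | zero =>
    intro X Y h
    have hX : X = [] := by cases X <;> simp_all
    have hY : Y = [] := by cases Y <;> simp_all
    subst hX; subst hY
    apply Set.Finite.subset (Set.finite_singleton (0:ℝ))
    rintro c hc
    cases hc
    rfl
  | succ n ih =>
    intro X Y h
    match X, Y with
    | [], [] =>
      apply Set.Finite.subset (Set.finite_singleton (0:ℝ))
      rintro c hc
      cases hc
      rfl
    | a :: X, [] =>
      have hX := ih X [] (by simp at h ⊢; omega)
      apply Set.Finite.subset (hX.image (fun c => w (some a) none + c))
      rintro c hc
      cases hc with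
      | del _ h' => exact ⟨_, h', rfl⟩
    | [], b :: Y =>
      have hY := ih [] Y (by simp at h ⊢; omega)
      apply Set.Finite.subset (hY.image (fun c => w none (some b) + c))
      rintro c hc
      cases hc with
      | ins _ h' => exact ⟨_, h', rfl⟩
    | a :: X, b :: Y =>
      have h1 := ih X (b :: Y) (by simp at h ⊢; omega)
      have h2 := ih (a :: X) Y (by simp at h ⊢; omega)
      have h3 := ih X Y (by simp at h ⊢; omega)
      apply Set.Finite.subset (((h1.image (fun c => w (some a) none + c)).union
        (h2.image (fun c => w none (some b) + c))).union
        (h3.image (fun c => w (some a) (some b) + c)))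
      rintro c hc
      cases hc with
      | del _ h' => exact Or.inl (Or.inl ⟨_, h', rfl⟩)
      | ins _ h' => exact Or.inl (Or.inr ⟨_, h', rfl⟩)
      | sub _ _ h' => exact Or.inr ⟨_, h', rfl⟩

lemma exists_min (hw : IsWeight w) (X Y : List σ) :
    ∃ l : List (EOp σ), inX l = X ∧ inY l = Y ∧ opsCost w l = ed w X Y := by
  have h1 : ed w X Y ∈ {c | EdAux w X Y c} :=
    (costs_nonempty w X Y).csInf_mem (costs_finite w (X.length + Y.length) X Y le_rfl)
  exact ops_of_edAux h1

end AuxDev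

section AuxDev2

open scoped Classical

variable {w : Option σ → Option σ → ℝ}

lemma exists_take (l : List (EOp σ)) :
    ∀ m, m ≤ (inX l).length → ∃ t ≤ l.length, (inX (l.take t)).length = m := by
  induction l with
  | nil =>
    intro m hm
    simp at hm
    exact ⟨0, by simp, by simp [hm]⟩
  | cons o l ih =>
    intro m hm
    rcases Nat.eq_zero_or_pos m with rfl | hm0
    · exact ⟨0, by simp, by simp⟩
    cases o with
    | ins b =>
      have hm' : m ≤ (inX l).length := by simpa [EOp.xs] using hm
      obtain ⟨t, ht, hteq⟩ := ih m hm'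
      exact ⟨t + 1, by simpa using ht, by simpa [EOp.xs] using hteq⟩
    | del a =>
      have hm' : m - 1 ≤ (inX l).length := by simp [EOp.xs] at hm; omega
      obtain ⟨t, ht, hteq⟩ := ih (m - 1) hm'
      refine ⟨t + 1, by simpa using ht, ?_⟩
      simp [EOp.xs, hteq]
      omega
    | sub a b =>
      have hm' : m - 1 ≤ (inX l).length := by simp [EOp.xs] at hm; omega
      obtain ⟨t, ht, hteq⟩ := ih (m - 1) hm'
      refine ⟨t + 1, by simpa using ht, ?_⟩
      simp [EOp.xs, hteq]
      omega

lemma dropWhile_head_false {α : Type*} (p : α → Bool) :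
    ∀ (l : List α) (b : α) (r : List α), l.dropWhile p = b :: r → p b = false := by
  intro l
  induction l with
  | nil => intro b r h; simp [List.dropWhile] at h
  | cons a l ih =>
    intro b r h
    by_cases hp : p a
    · rw [List.dropWhile_cons, if_pos hp] at h
      exact ih b r h
    · rw [List.dropWhile_cons, if_neg hp] at h
      cases h
      simpa using hp

lemma countP_not_add {α : Type*} (p : α → Bool) (l : List α) :
    l.countP p + l.countP (fun x => !p x) = l.length := by
  induction l with
  | nil => simp
  | cons a l ih =>
    simp only [List.countP_cons, List.length_cons]
    cases h : p a <;> simp [h] <;> omega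

lemma longrun {α : Type*} (p : α → Bool) :
    ∀ (n : ℕ) (l : List α), l.length ≤ n →
      ∃ l₁ l₂ l₃ : List α, l = l₁ ++ l₂ ++ l₃ ∧ (∀ x ∈ l₂, p x = true) ∧
        l.countP p ≤ (l.countP (fun x => !p x) + 1) * l₂.length := by
  intro n
  induction n with
  | zero =>
    intro l hl
    have : l = [] := List.eq_nil_of_length_eq_zero (by omega)
    subst this
    exact ⟨[], [], [], by simp, by simp, by simp⟩
  | succ n ih =>
    intro l hl
    rcases hbad : l.dropWhile p with _ | ⟨bad, rest⟩
    · refine ⟨[], l, [], by simp, ?_, ?_⟩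
      · intro x hx
        have htl : l.takeWhile p = l := by
          have := (List.takeWhile_append_dropWhile : l.takeWhile p ++ l.dropWhile p = l)
          rwa [hbad, List.append_nil] at this
        exact List.mem_takeWhile_imp (htl ▸ hx)
      · exact le_trans List.countP_le_length (Nat.le_mul_of_pos_left _ (Nat.succ_pos _))
    · have hdecomp : l = l.takeWhile p ++ bad :: rest := by
        conv_lhs => rw [← (List.takeWhile_append_dropWhile : l.takeWhile p ++ l.dropWhile p = l), hbad]
      have hbadp : p bad = false := dropWhile_head_false p l bad rest hbad
      have hrest : rest.length ≤ n := by
        have := congrArg List.length hdecomp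
        simp at this
        omega
      obtain ⟨r₁, r₂, r₃, hr, hr2, hrcount⟩ := ih rest hrest
      set tw := l.takeWhile p with htw
      have htwp : ∀ x ∈ tw, p x = true := fun x hx => List.mem_takeWhile_imp hx
      have hctw : tw.countP p = tw.length := List.countP_eq_length.mpr htwp
      have hctw' : tw.countP (fun x => !p x) = 0 := by
        rw [List.countP_eq_zero]
        intro x hx
        simp [htwp x hx]
      have hcl : l.countP p = tw.length + rest.countP p := by
        rw [hdecomp, List.countP_append, List.countP_cons, hctw]
        simp [hbadp]
      have hcl' : l.countP (fun x => !p x) = rest.countP (fun x => !p x) + 1 := by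
        rw [hdecomp, List.countP_append, List.countP_cons, hctw']
        simp [hbadp]
      by_cases hcase : r₂.length ≤ tw.length
      · refine ⟨[], tw, bad :: rest, by simpa using hdecomp, htwp, ?_⟩
        rw [hcl, hcl']
        calc tw.length + rest.countP p
            ≤ tw.length + (rest.countP (fun x => !p x) + 1) * r₂.length := by omega
          _ ≤ tw.length + (rest.countP (fun x => !p x) + 1) * tw.length :=
              Nat.add_le_add_left (Nat.mul_le_mul_left _ hcase) _
          _ = (rest.countP (fun x => !p x) + 1 + 1) * tw.length := by ring
      · refine ⟨tw ++ bad :: r₁, r₂, r₃, ?_, hr2, ?_⟩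
        · rw [hdecomp, hr]; simp
        · rw [hcl, hcl']
          calc tw.length + rest.countP p
              ≤ r₂.length + (rest.countP (fun x => !p x) + 1) * r₂.length := by omega
            _ = (rest.countP (fun x => !p x) + 1 + 1) * r₂.length := by ring

lemma char_at (l₁ l₂ : List (EOp σ)) (a b : σ) {X Y : List σ}
    (hX : inX (l₁ ++ .sub a b :: l₂) = X) (hY : inY (l₁ ++ .sub a b :: l₂) = Y) :
    X[(inX l₁).length]? = some a ∧ Y[(inY l₁).length]? = some b := by
  constructor
  · rw [← hX]
    rw [inX_append, inX_cons]
    rw [List.getElem?_append_right le_rfl]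
    simp [EOp.xs]
  · rw [← hY]
    rw [inY_append, inY_cons]
    rw [List.getElem?_append_right le_rfl]
    simp [EOp.ys]

lemma occ_char {P X : List σ} {p : ℕ} (h : OccursAt P X p) {j : ℕ} (hj : j < P.length) :
    X[p + j]? = P[j]? := by
  conv_rhs => rw [← h.2]
  unfold seg
  rw [Nat.add_sub_cancel_left]
  rw [List.getElem?_take, if_pos hj, List.getElem?_drop]

@[simp] lemma listPow_zero (Q : List σ) : listPow Q 0 = [] := rfl

lemma listPow_succ (Q : List σ) (m : ℕ) : listPow Q (m + 1) = Q ++ listPow Q m := by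
  simp [listPow, List.replicate_succ]

lemma seg_append (X : List σ) {i j k : ℕ} (hij : i ≤ j) (hjk : j ≤ k) :
    seg X i j ++ seg X j k = seg X i k := by
  unfold seg
  have hdj : X.drop j = (X.drop i).drop (j - i) := by
    rw [List.drop_drop]
    congr 1
    omega
  rw [hdj, ← List.take_add]
  congr 1
  omega

lemma seg_length {X : List σ} {i j : ℕ} (h : j ≤ X.length) : (seg X i j).length = j - i := by
  simp [seg]
  omega

lemma seg_getElem? {X : List σ} {i j n : ℕ} (h : n < j - i) : (seg X i j)[n]? = X[i + n]? := by
  simp only [seg, List.getElem?_take, if_pos h, List.getElem?_drop]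

lemma pow_of_period (P : List σ) (q : ℕ) (hq : 0 < q) :
    ∀ (m c : ℕ), c + m * q ≤ P.length →
      (∀ s, c ≤ s → s + q < c + m * q → P[s]? = P[s + q]?) →
      seg P c (c + m * q) = listPow (seg P c (c + q)) m := by
  intro m
  induction m with
  | zero => intro c _ _; simp [seg]
  | succ m ih =>
    intro c hlen hper
    have e1 : c + (m + 1) * q = (c + q) + m * q := by ring
    have h1 : seg P c (c + (m + 1) * q) =
        seg P c (c + q) ++ seg P (c + q) ((c + q) + m * q) := by
      rw [show c + (m + 1) * q = (c + q) + m * q from by ring]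
      exact (seg_append P (by omega) (by omega)).symm
    rw [h1, listPow_succ]
    congr 1
    rcases Nat.eq_zero_or_pos m with rfl | hm
    · simp [seg]
    have hih := ih (c + q) (by omega) ?_
    · rw [hih]
      congr 1
      apply List.ext_getElem?
      intro n
      by_cases hn : n < q
      · rw [seg_getElem? (by omega), seg_getElem? (by omega)]
        have := hper (c + n) (by omega) (by
          have : 1 * q ≤ m * q := Nat.mul_le_mul_right q hm
          omega)
        rw [show c + q + n = (c + n) + q from by omega]
        exact this.symm
      · have hq2 : c + q + q ≤ P.length := by
          have : 1 * q ≤ m * q := Nat.mul_le_mul_right q hm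
          omega
        rw [List.getElem?_eq_none, List.getElem?_eq_none]
        · rw [seg_length (by omega)]; omega
        · rw [seg_length hq2]; omega
    · intro s hs1 hs2
      exact hper s (by omega) (by omega)

lemma seg_infix (P : List σ) {G E a e : ℕ} (hGa : G ≤ a) (hae : a ≤ e) (heE : e ≤ E) :
    seg P a e <:+: seg P G E := by
  refine ⟨seg P G a, seg P e E, ?_⟩
  rw [seg_append P hGa hae, seg_append P (le_trans hGa hae) heE]

end AuxDev2

section AuxDev3

open scoped Classical

variable {w : Option σ → Option σ → ℝ}

lemma sync (k : ℕ) (hk : 1 ≤ k) (hw : Normalized w)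
    (P X Y : List σ) (pX pY : ℕ)
    (hX : OccursAt P X pX) (hY : OccursAt P Y pY)
    (hpq : |(pX : ℤ) - (pY : ℤ)| ≤ (k : ℤ))
    (G : ℕ) (hGR : G + 21 * k ^ 3 ≤ P.length)
    (haper : AvoidsPeriodicity k (seg P G (G + 21 * k ^ 3)))
    (l : List (EOp σ)) (hlX : inX l = X) (hlY : inY l = Y)
    (hc : opsCost w l ≤ (k : ℝ)) :
    ∃ i, G ≤ i ∧ i < G + 21 * k ^ 3 ∧ ∃ t,
      (inX (l.take t)).length = pX + i ∧ (inY (l.take t)).length = pY + i := by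
  obtain ⟨hpq1, hpq2⟩ := abs_le.mp hpq
  have ek1 : k ^ 1 = k := pow_one k
  have e12 : k ^ 1 ≤ k ^ 2 := Nat.pow_le_pow_right hk (by omega)
  have e23 : k ^ 2 ≤ k ^ 3 := Nat.pow_le_pow_right hk (by omega)
  have hk3 : 1 ≤ k ^ 3 := Nat.one_le_pow _ _ hk
  have hnm : nmc l ≤ k := by
    have h1 := nmc_le_opsCost hw l
    exact_mod_cast le_trans h1 hc
  have hXlen : pX + (G + 21 * k ^ 3) ≤ (inX l).length := by
    rw [hlX]; have := hX.1; omega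
  obtain ⟨t2, ht2len, ht2⟩ := exists_take l (pX + (G + 21 * k ^ 3)) hXlen
  obtain ⟨t1, ht1len, ht1⟩ := exists_take (l.take t2) (pX + G) (by rw [ht2]; omega)
  obtain ⟨u, v, z, hluvz, hcXu, hcXuv⟩ :
      ∃ u v z : List (EOp σ), l = u ++ v ++ z ∧ (inX u).length = pX + G ∧
        (inX (u ++ v)).length = pX + G + 21 * k ^ 3 := by
    refine ⟨(l.take t2).take t1, (l.take t2).drop t1, l.drop t2, ?_, ht1, ?_⟩
    · rw [List.take_append_drop, List.take_append_drop]
    · rw [List.take_append_drop, ht2]; omega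
  have hcXv : (inX v).length = 21 * k ^ 3 := by
    rw [inX_append, List.length_append, hcXu] at hcXuv; omega
  have hnml : nmc u + nmc v + nmc z = nmc l := by
    rw [hluvz, nmc_append, nmc_append]
  have hnmv : nmc v ≤ k := by omega
  have hvlen : 21 * k ^ 3 ≤ v.length := by
    have := length_inX_le v; omega
  have hcntv : v.countP EOp.isM + nmc v = v.length := countP_not_add EOp.isM v
  obtain ⟨m1, m2, m3, hvdec, hm2, hcount⟩ := longrun EOp.isM v.length v le_rfl
  have hcount' : v.countP EOp.isM ≤ (nmc v + 1) * m2.length := hcount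
  have hLlow : 21 * k ^ 3 ≤ (k + 1) * m2.length + k := by
    have h1 : (nmc v + 1) * m2.length ≤ (k + 1) * m2.length :=
      Nat.mul_le_mul_right _ (by omega)
    omega
  have hLbig : 8 * k ^ 2 + 2 * k ≤ m2.length := by
    by_contra hcon
    push_neg at hcon
    have h2 : (k + 1) * (m2.length + 1) ≤ (k + 1) * (8 * k ^ 2 + 2 * k) :=
      Nat.mul_le_mul_left _ (by omega)
    have h3 : (k + 1) * (8 * k ^ 2 + 2 * k) = 8 * k ^ 3 + 10 * k ^ 2 + 2 * k := by ring
    have h5 : (k + 1) * (m2.length + 1) = (k + 1) * m2.length + (k + 1) := by ring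
    omega
  have hL1 : 1 ≤ m2.length := by omega
  have hcXm2 : (inX m2).length = m2.length := (allM_len hm2).1
  have hparts : (inX m1).length + m2.length ≤ 21 * k ^ 3 := by
    have h1 : (inX v).length =
        (inX m1).length + ((inX m2).length + (inX m3).length) := by
      rw [hvdec]; simp
    omega
  have hcXpre : (inX (u ++ m1)).length = pX + (G + (inX m1).length) := by
    rw [inX_append, List.length_append, hcXu]; omega
  have hnmpre : nmc (u ++ m1) ≤ k := by
    have h1 : nmc v = nmc m1 + nmc m2 + nmc m3 := by rw [hvdec, nmc_append, nmc_append]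
    rw [nmc_append]; omega
  have hdiff := inXY_diff (u ++ m1)
  rw [hcXpre] at hdiff
  -- abbreviations
  set a := G + (inX m1).length with ha
  set c0 := (inY (u ++ m1)).length with hc0
  set L := m2.length with hLdef
  have haL : a + L ≤ G + 21 * k ^ 3 := by omega
  have hmatch : ∀ s, s < L → ∃ α : σ,
      X[pX + a + s]? = some α ∧ Y[c0 + s]? = some α := by
    intro s hs
    have hsm2 : s < m2.length := hs
    obtain ⟨α, hα⟩ := EOp.isM_iff.mp (hm2 _ (List.getElem_mem hsm2))
    have hm2dec : m2 = m2.take s ++ (EOp.sub α α) :: m2.drop (s + 1) := by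
      conv_lhs => rw [← List.take_append_drop s m2]
      rw [List.drop_eq_getElem_cons hsm2, hα]
    have hldec : l = ((u ++ m1) ++ m2.take s) ++
        (EOp.sub α α) :: (m2.drop (s + 1) ++ (m3 ++ z)) := by
      rw [hluvz, hvdec]
      conv_lhs => rw [hm2dec]
      simp [List.append_assoc]
    have hch := char_at ((u ++ m1) ++ m2.take s) (m2.drop (s + 1) ++ (m3 ++ z)) α α
      (X := X) (Y := Y) (by rw [← hldec]; exact hlX) (by rw [← hldec]; exact hlY)
    have hmtake : ∀ o ∈ m2.take s, o.isM = true := fun o ho => hm2 o (List.mem_of_mem_take ho)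
    have hlen1 : (inX ((u ++ m1) ++ m2.take s)).length = pX + a + s := by
      rw [inX_append, List.length_append, hcXpre, (allM_len hmtake).1, List.length_take]
      omega
    have hlen2 : (inY ((u ++ m1) ++ m2.take s)).length = c0 + s := by
      rw [inY_append, List.length_append, ← hc0, (allM_len hmtake).2, List.length_take]
      omega
    exact ⟨α, by rw [← hlen1]; exact hch.1, by rw [← hlen2]; exact hch.2⟩
  have hXP : ∀ j, j < P.length → X[pX + j]? = P[j]? := fun j hj => occ_char hX hj
  have hYP : ∀ j, j < P.length → Y[pY + j]? = P[j]? := fun j hj => occ_char hY hj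
  rcases lt_trichotomy c0 (pY + a) with hcase | hcase | hcase
  · -- c0 < pY + a : negative shift q
    exfalso
    set q := (pY + a) - c0 with hq
    have hq1 : 1 ≤ q := by omega
    have hq2k : q ≤ 2 * k := by omega
    have hqL : (4 * k + 1) * q ≤ L := by
      have h1 : (4 * k + 1) * q ≤ (4 * k + 1) * (2 * k) := Nat.mul_le_mul_left _ hq2k
      have h2 : (4 * k + 1) * (2 * k) = 8 * k ^ 2 + 2 * k := by ring
      omega
    have hper : ∀ s, a ≤ s → s + q < a + (4 * k + 1) * q → P[s]? = P[s + q]? := by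
      intro s hs1 hs2
      obtain ⟨α, hXc, hYc⟩ := hmatch (s - a + q) (by omega)
      have hx : P[s + q]? = some α := by
        rw [← hXP (s + q) (by omega), ← hXc]
        congr 1
        omega
      have hy : P[s]? = some α := by
        rw [← hYP s (by omega), ← hYc]
        congr 1
        omega
      rw [hx, hy]
    have hlenP : a + (4 * k + 1) * q ≤ P.length := by omega
    have hpow := pow_of_period P q (by omega) (4 * k + 1) a hlenP hper
    have hinfix : listPow (seg P a (a + q)) (4 * k + 1) <:+: seg P G (G + 21 * k ^ 3) := by
      rw [← hpow]
      exact seg_infix P (by omega) (by omega) (by omega)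
    exact haper (seg P a (a + q)) (by rw [seg_length (by omega)]; omega)
      (by rw [seg_length (by omega)]; omega) hinfix
  · -- synchronized
    refine ⟨a, by omega, by omega, (u ++ m1).length, ?_, ?_⟩
    · have hldec0 : l = (u ++ m1) ++ (m2 ++ (m3 ++ z)) := by
        rw [hluvz, hvdec]; simp [List.append_assoc]
      rw [hldec0, List.take_left]
      exact hcXpre
    · have hldec0 : l = (u ++ m1) ++ (m2 ++ (m3 ++ z)) := by
        rw [hluvz, hvdec]; simp [List.append_assoc]
      rw [hldec0, List.take_left, ← hc0]
      omega
  · -- c0 > pY + a : positive shift q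
    exfalso
    set q := c0 - (pY + a) with hq
    have hq1 : 1 ≤ q := by omega
    have hq2k : q ≤ 2 * k := by omega
    have hqL : (4 * k + 1) * q ≤ L := by
      have h1 : (4 * k + 1) * q ≤ (4 * k + 1) * (2 * k) := Nat.mul_le_mul_left _ hq2k
      have h2 : (4 * k + 1) * (2 * k) = 8 * k ^ 2 + 2 * k := by ring
      omega
    have hper : ∀ s, a ≤ s → s + q < a + (4 * k + 1) * q → P[s]? = P[s + q]? := by
      intro s hs1 hs2
      obtain ⟨α, hXc, hYc⟩ := hmatch (s - a) (by omega)
      have hx : P[s]? = some α := by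
        rw [← hXP s (by omega), ← hXc]
        congr 1
        omega
      have hy : P[s + q]? = some α := by
        rw [← hYP (s + q) (by omega), ← hYc]
        congr 1
        omega
      rw [hx, hy]
    have hlenP : a + (4 * k + 1) * q ≤ P.length := by omega
    have hpow := pow_of_period P q (by omega) (4 * k + 1) a hlenP hper
    have hinfix : listPow (seg P a (a + q)) (4 * k + 1) <:+: seg P G (G + 21 * k ^ 3) := by
      rw [← hpow]
      exact seg_infix P (by omega) (by omega) (by omega)
    exact haper (seg P a (a + q)) (by rw [seg_length (by omega)]; omega)
      (by rw [seg_length (by omega)]; omega) hinfix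

end AuxDev3

section AuxDev4

open scoped Classical

variable {w : Option σ → Option σ → ℝ}

lemma occ_take_drop {P X : List σ} {p : ℕ} (h : OccursAt P X p) :
    (X.drop p).take P.length = P := by
  have := h.2
  unfold seg at this
  rwa [Nat.add_sub_cancel_left] at this

lemma replace_eq (k : ℕ) (hk : 1 ≤ k) (P P' X : List σ) (p i0 i1 : ℕ) (hocc : OccursAt P X p)
    (hlen : 42 * k ^ 3 ≤ P.length) (hlen' : 42 * k ^ 3 ≤ P'.length)
    (hpre : P.take (21 * k ^ 3) = P'.take (21 * k ^ 3))
    (hsuf : P.drop (P.length - 21 * k ^ 3) = P'.drop (P'.length - 21 * k ^ 3))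
    (h0 : i0 ≤ 21 * k ^ 3) (h1 : P.length - 21 * k ^ 3 ≤ i1) (h1' : i1 ≤ P.length) :
    X.take p ++ P' ++ X.drop (p + P.length) =
      X.take (p + i0) ++ seg P' i0 (P'.length - (P.length - i1)) ++ X.drop (p + i1) := by
  have hk3 : 1 ≤ k ^ 3 := Nat.one_le_pow _ _ hk
  have hi1' : i0 ≤ P'.length - (P.length - i1) ∧ P'.length - (P.length - i1) ≤ P'.length := by
    omega
  have hP'dec : P' = P'.take i0 ++ seg P' i0 (P'.length - (P.length - i1)) ++
      P'.drop (P'.length - (P.length - i1)) := by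
    unfold seg
    have hd : P'.drop (P'.length - (P.length - i1)) =
        ((P'.drop i0).drop ((P'.length - (P.length - i1)) - i0)) := by
      rw [List.drop_drop]
      congr 1
      omega
    rw [hd, List.append_assoc, List.take_append_drop, List.take_append_drop]
  have htake : X.take (p + i0) = X.take p ++ P'.take i0 := by
    rw [List.take_add]
    congr 1
    calc (X.drop p).take i0 = ((X.drop p).take P.length).take i0 := by
          rw [List.take_take, inf_of_le_left (by omega : i0 ≤ P.length)]
      _ = P.take i0 := by rw [occ_take_drop hocc]
      _ = (P.take (21 * k ^ 3)).take i0 := by rw [List.take_take, inf_of_le_left h0]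
      _ = (P'.take (21 * k ^ 3)).take i0 := by rw [hpre]
      _ = P'.take i0 := by rw [List.take_take, inf_of_le_left h0]
  have hdrop : X.drop (p + i1) = P'.drop (P'.length - (P.length - i1)) ++
      X.drop (p + P.length) := by
    have hXp : X.drop p = P ++ X.drop (p + P.length) := by
      conv_lhs => rw [← List.take_append_drop P.length (X.drop p)]
      rw [occ_take_drop hocc, List.drop_drop]
    have h2 : X.drop (p + i1) = (X.drop p).drop i1 := by rw [List.drop_drop]
    rw [h2, hXp, List.drop_append_of_le_length h1']
    congr 1
    have e1 : P.drop i1 = (P.drop (P.length - 21 * k ^ 3)).drop (i1 - (P.length - 21 * k ^ 3)) := by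
      rw [List.drop_drop]
      congr 1
      omega
    rw [e1, hsuf, List.drop_drop]
    congr 1
    omega
  rw [htake, hdrop]
  conv_lhs => rw [hP'dec]
  simp [List.append_assoc]

lemma occursAt_replace (P P' X : List σ) (p : ℕ) (hocc : OccursAt P X p) :
    OccursAt P' (X.take p ++ P' ++ X.drop (p + P.length)) p := by
  have hp : p ≤ X.length := by have := hocc.1; omega
  have hlt : (X.take p).length = p := by rw [List.length_take]; omega
  constructor
  · simp only [List.length_append, List.length_drop, hlt]
    have := hocc.1
    omega
  · unfold seg
    rw [Nat.add_sub_cancel_left, List.append_assoc, List.drop_left' hlt,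
      List.take_left' rfl]

lemma replace_inv (P P' X : List σ) (p : ℕ) (hocc : OccursAt P X p) :
    (X.take p ++ P' ++ X.drop (p + P.length)).take p ++ P ++
      (X.take p ++ P' ++ X.drop (p + P.length)).drop (p + P'.length) = X := by
  have hp : p ≤ X.length := by have := hocc.1; omega
  have hlt : (X.take p).length = p := by rw [List.length_take]; omega
  have h1 : (X.take p ++ P' ++ X.drop (p + P.length)).take p = X.take p := by
    rw [List.append_assoc, List.take_left' hlt]
  have h2 : (X.take p ++ P' ++ X.drop (p + P.length)).drop (p + P'.length) =
      X.drop (p + P.length) :=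
    List.drop_left' (by rw [List.length_append, hlt])
  rw [h1, h2]
  have hXp : X.drop p = P ++ X.drop (p + P.length) := by
    conv_lhs => rw [← List.take_append_drop P.length (X.drop p)]
    rw [occ_take_drop hocc, List.drop_drop]
  conv_rhs => rw [← List.take_append_drop p X, hXp]
  rw [List.append_assoc]

end AuxDev4

section AuxDev5

open scoped Classical

variable {w : Option σ → Option σ → ℝ}

lemma key_ineq (k : ℕ) (hk : 1 ≤ k) (P P' : List σ)
    (hlen : 42 * k ^ 3 ≤ P.length) (hlen' : 42 * k ^ 3 ≤ P'.length)
    (hpre : P.take (21 * k ^ 3) = P'.take (21 * k ^ 3))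
    (hsuf : P.drop (P.length - 21 * k ^ 3) = P'.drop (P'.length - 21 * k ^ 3))
    (hpre_aper : AvoidsPeriodicity k (P.take (21 * k ^ 3)))
    (hsuf_aper : AvoidsPeriodicity k (P.drop (P.length - 21 * k ^ 3)))
    (hw : Normalized w)
    (X Y : List σ) (pX pY : ℕ) (hX : OccursAt P X pX) (hY : OccursAt P Y pY)
    (hpq : |(pX : ℤ) - (pY : ℤ)| ≤ (k : ℤ)) (hed : ed w X Y ≤ (k : ℝ)) :
    ed w (X.take pX ++ P' ++ X.drop (pX + P.length))
      (Y.take pY ++ P' ++ Y.drop (pY + P.length)) ≤ ed w X Y := by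
  have hk3 : 1 ≤ k ^ 3 := Nat.one_le_pow _ _ hk
  obtain ⟨l, hlX, hlY, hlc⟩ := exists_min hw.1 X Y
  have hc : opsCost w l ≤ (k : ℝ) := by rw [hlc]; exact hed
  have haper0 : AvoidsPeriodicity k (seg P 0 (0 + 21 * k ^ 3)) := by
    have e : seg P 0 (0 + 21 * k ^ 3) = P.take (21 * k ^ 3) := by simp [seg]
    rwa [e]
  obtain ⟨i0, hi0G, hi0R, t0, ht0X, ht0Y⟩ :=
    sync k hk hw P X Y pX pY hX hY hpq 0 (by omega) haper0 l hlX hlY hc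
  have haperS : AvoidsPeriodicity k
      (seg P (P.length - 21 * k ^ 3) (P.length - 21 * k ^ 3 + 21 * k ^ 3)) := by
    have e : seg P (P.length - 21 * k ^ 3) (P.length - 21 * k ^ 3 + 21 * k ^ 3) =
        P.drop (P.length - 21 * k ^ 3) := by
      unfold seg
      rw [Nat.add_sub_cancel_left]
      exact List.take_of_length_le (by rw [List.length_drop]; omega)
    rwa [e]
  obtain ⟨i1, hi1G, hi1R, t1, ht1X, ht1Y⟩ := sync k hk hw P X Y pX pY hX hY hpq
    (P.length - 21 * k ^ 3) (by omega) haperS l hlX hlY hc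
  have hi01 : i0 < i1 := by omega
  have ht01 : t0 ≤ t1 := by
    by_contra hcon
    push_neg at hcon
    have h1 : (l.take t0).take t1 = l.take t1 := by
      rw [List.take_take, inf_of_le_left (le_of_lt hcon)]
    have he : l.take t1 ++ (l.take t0).drop t1 = l.take t0 := by
      rw [← h1, List.take_append_drop]
    have h2 := congrArg (fun s => (inX s).length) he
    simp only [inX_append, List.length_append] at h2
    rw [ht0X, ht1X] at h2
    omega
  have hdec : l = l.take t0 ++ ((l.take t1).drop t0 ++ l.drop t1) := by
    rw [← List.append_assoc]
    have h1 : (l.take t1).take t0 = l.take t0 := by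
      rw [List.take_take, inf_of_le_left ht01]
    rw [← h1, List.take_append_drop, List.take_append_drop]
  have hX1 : X.take (pX + i0) = inX (l.take t0) := by
    have h2 : X = inX (l.take t0) ++ inX ((l.take t1).drop t0 ++ l.drop t1) := by
      rw [← inX_append, ← hdec, hlX]
    conv_lhs => rw [h2]
    rw [List.take_left' ht0X]
  have hY1 : Y.take (pY + i0) = inY (l.take t0) := by
    have h2 : Y = inY (l.take t0) ++ inY ((l.take t1).drop t0 ++ l.drop t1) := by
      rw [← inY_append, ← hdec, hlY]
    conv_lhs => rw [h2]
    rw [List.take_left' ht0Y]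
  have hX3 : X.drop (pX + i1) = inX (l.drop t1) := by
    have h2 : X = inX (l.take t1) ++ inX (l.drop t1) := by
      rw [← inX_append, List.take_append_drop, hlX]
    conv_lhs => rw [h2]
    rw [List.drop_left' ht1X]
  have hY3 : Y.drop (pY + i1) = inY (l.drop t1) := by
    have h2 : Y = inY (l.take t1) ++ inY (l.drop t1) := by
      rw [← inY_append, List.take_append_drop, hlY]
    conv_lhs => rw [h2]
    rw [List.drop_left' ht1Y]
  have hreX := replace_eq k hk P P' X pX i0 i1 hX hlen hlen' hpre hsuf
    (by omega) (by omega) (by omega)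
  have hreY := replace_eq k hk P P' Y pY i0 i1 hY hlen hlen' hpre hsuf
    (by omega) (by omega) (by omega)
  set mid := matchOps (σ := σ) (seg P' i0 (P'.length - (P.length - i1))) with hmid
  have hnewX : inX (l.take t0 ++ (mid ++ l.drop t1)) =
      X.take pX ++ P' ++ X.drop (pX + P.length) := by
    rw [hreX, inX_append, inX_append, hmid, inX_matchOps, ← hX1, ← hX3,
      List.append_assoc]
  have hnewY : inY (l.take t0 ++ (mid ++ l.drop t1)) =
      Y.take pY ++ P' ++ Y.drop (pY + P.length) := by
    rw [hreY, inY_append, inY_append, hmid, inY_matchOps, ← hY1, ← hY3,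
      List.append_assoc]
  have hcost : opsCost w (l.take t0 ++ (mid ++ l.drop t1)) ≤ opsCost w l := by
    conv_rhs => rw [hdec]
    simp only [opsCost_append, hmid, opsCost_matchOps hw.1]
    have := opsCost_nonneg hw.1 ((l.take t1).drop t0)
    linarith
  calc ed w (X.take pX ++ P' ++ X.drop (pX + P.length))
        (Y.take pY ++ P' ++ Y.drop (pY + P.length))
      ≤ opsCost w (l.take t0 ++ (mid ++ l.drop t1)) := ed_le_ops hw.1 hnewX hnewY
    _ ≤ opsCost w l := hcost
    _ = ed w X Y := hlc

end AuxDev5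

/-- If `P, P'` have length at least `42k³`, share their length-`21k³`
prefixes and suffixes, and these shared prefix and suffix avoid `k`-periodicity, then `P`
and `P'` are `ed^w_{≤k}`-equivalent for every normalized weight function `w`. -/
theorem aperiodic_equivalence (k : ℕ) (hk : 1 ≤ k) (P P' : List σ)
    (hlen : 42 * k ^ 3 ≤ P.length) (hlen' : 42 * k ^ 3 ≤ P'.length)
    (hpre : P.take (21 * k ^ 3) = P'.take (21 * k ^ 3))
    (hsuf : P.drop (P.length - 21 * k ^ 3) = P'.drop (P'.length - 21 * k ^ 3))
    (hpre_aper : AvoidsPeriodicity k (P.take (21 * k ^ 3)))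
    (hsuf_aper : AvoidsPeriodicity k (P.drop (P.length - 21 * k ^ 3)))
    (w : Option σ → Option σ → ℝ) (hw : Normalized w) :
    EdEquiv w k P P' := by
  unfold EdEquiv
  intro X Y pX pY hX hY hpq
  have hX' : OccursAt P' (X.take pX ++ P' ++ X.drop (pX + P.length)) pX :=
    occursAt_replace P P' X pX hX
  have hY' : OccursAt P' (Y.take pY ++ P' ++ Y.drop (pY + P.length)) pY :=
    occursAt_replace P P' Y pY hY
  have hpre_aper' : AvoidsPeriodicity k (P'.take (21 * k ^ 3)) := hpre ▸ hpre_aper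
  have hsuf_aper' : AvoidsPeriodicity k (P'.drop (P'.length - 21 * k ^ 3)) :=
    hsuf ▸ hsuf_aper
  have hXX := replace_inv P P' X pX hX
  have hYY := replace_inv P P' Y pY hY
  have fwd : ed w X Y ≤ (k : ℝ) →
      ed w (X.take pX ++ P' ++ X.drop (pX + P.length))
        (Y.take pY ++ P' ++ Y.drop (pY + P.length)) ≤ ed w X Y :=
    fun h => key_ineq k hk P P' hlen hlen' hpre hsuf hpre_aper hsuf_aper hw
      X Y pX pY hX hY hpq h
  have bwd : ed w (X.take pX ++ P' ++ X.drop (pX + P.length))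
        (Y.take pY ++ P' ++ Y.drop (pY + P.length)) ≤ (k : ℝ) →
      ed w X Y ≤ ed w (X.take pX ++ P' ++ X.drop (pX + P.length))
        (Y.take pY ++ P' ++ Y.drop (pY + P.length)) := by
    intro h
    have := key_ineq k hk P' P hlen' hlen hpre.symm hsuf.symm hpre_aper' hsuf_aper' hw
      _ _ pX pY hX' hY' hpq h
    rwa [hXX, hYY] at this
  unfold edK
  by_cases h1 : ed w X Y ≤ (k : ℝ)
  · have h2 := fwd h1
    have h3 := bwd (le_trans h2 h1)
    rw [if_pos h1, if_pos (le_trans h2 h1), le_antisymm h2 h3]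
  · have h2 : ¬ ed w (X.take pX ++ P' ++ X.drop (pX + P.length))
        (Y.take pY ++ P' ++ Y.drop (pY + P.length)) ≤ (k : ℝ) :=
      fun h => h1 (le_trans (bwd h) h)
    rw [if_neg h1, if_neg h2]
end

section
/- For every skewmetric weight function w and all x, y ∈ Σ ∪ {ε}, the Dyck edit distance of the two-character string xy satisfies dyck^w(xy) = min over z ∈ T ∪ {ε} of w(x, z) + w(y, z̄). -/
variable {σ : Type*}

/-- Labelled parentheses: `(a, true)` is an opening parenthesis of type `a` (in `T`), and
`(a, false)` is the corresponding closing parenthesis (in `T̄`). -/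
abbrev Par (σ : Type*) := σ × Bool

/-- The complementary parenthesis. -/
def parCompl : Par σ → Par σ := fun p => (p.1, !p.2)

/-- The reverse complement of a string of parentheses. -/
def revComp (S : List (Par σ)) : List (Par σ) := S.reverse.map parCompl

/-- The Dyck language: balanced (well-parenthesized) strings. -/
inductive IsDyck : List (Par σ) → Prop
  | nil : IsDyck ([] : List (Par σ))
  | node (a : σ) {F G : List (Par σ)} :
      IsDyck F → IsDyck G → IsDyck ((a, true) :: F ++ (a, false) :: G)

/-- A skewmetric weight function: a weight function satisfying the triangle inequality
and skew-symmetry `w(a,b) = w(b̄,ā)` (with `ε̄ = ε`). -/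
def Skewmetric (w : Option (Par σ) → Option (Par σ) → ℝ) : Prop :=
  IsWeight w ∧ (∀ a b c, w a c ≤ w a b + w b c) ∧
  ∀ a b, w a b = w (b.map parCompl) (a.map parCompl)

/-- Weighted Dyck edit distance: minimum weighted edit distance to a string in the Dyck
language. -/
noncomputable def dyck (w : Option (Par σ) → Option (Par σ) → ℝ)
    (X : List (Par σ)) : ℝ :=
  sInf {c | ∃ Y : List (Par σ), IsDyck Y ∧ c = ed w X Y}

/-- Weighted Dyck edit distance capped at `k`. -/
noncomputable def dyckK (w : Option (Par σ) → Option (Par σ) → ℝ) (k : ℝ)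
    (X : List (Par σ)) : EReal :=
  if dyck w X ≤ k then ((dyck w X : ℝ) : EReal) else ⊤

/-- The height `H(i)`: number of opening minus closing parentheses in `X[0..i)`. -/
def ht (X : List (Par σ)) (i : ℕ) : ℤ :=
  (((X.take i).countP (fun p => p.2)) : ℤ) - (((X.take i).countP (fun p => !p.2)) : ℤ)

/-- The fragments `X[a..b) ∈ T*` and `X[c..d) ∈ T̄*` are `k`-synchronized: equal lengths,
`b ≤ c`, and `H(b) + H(c) − 2·min_{m ∈ [b..c]} H(m) ≤ 2k`. -/
def KSync (k : ℕ) (X : List (Par σ)) (a b c d : ℕ) : Prop :=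
  a ≤ b ∧ b ≤ c ∧ c ≤ d ∧ d ≤ X.length ∧
  (∀ p ∈ (X.drop a).take (b - a), p.2 = true) ∧
  (∀ p ∈ (X.drop c).take (d - c), p.2 = false) ∧
  b - a = d - c ∧
  ∃ m₀, b ≤ m₀ ∧ m₀ ≤ c ∧ (∀ m, b ≤ m → m ≤ c → ht X m₀ ≤ ht X m) ∧
    ht X b + ht X c - 2 * ht X m₀ ≤ 2 * (k : ℤ)

namespace DyckPairAux

variable {σ : Type*}

/-- Total insertion cost of a list. -/
def W (w : Option (Par σ) → Option (Par σ) → ℝ) (L : List (Par σ)) : ℝ :=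
  (L.map (fun p => w none (some p))).sum

/-- Occurrence count. -/
def cnt [DecidableEq (Par σ)] (q : Par σ) (L : List (Par σ)) : ℕ :=
  L.countP (fun p => decide (p = q))

variable {w : Option (Par σ) → Option (Par σ) → ℝ}

lemma W_nil : W w ([] : List (Par σ)) = 0 := rfl

lemma W_cons (p : Par σ) (L : List (Par σ)) :
    W w (p :: L) = w none (some p) + W w L := by simp [W]

lemma W_append (A B : List (Par σ)) : W w (A ++ B) = W w A + W w B := by
  simp [W]

lemma W_nonneg (hw : IsWeight w) (L : List (Par σ)) : 0 ≤ W w L := by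
  apply List.sum_nonneg
  intro x hx
  simp only [List.mem_map] at hx
  obtain ⟨p, -, rfl⟩ := hx
  exact hw.1 _ _

section cnt
variable [DecidableEq (Par σ)]

lemma cnt_nil (q : Par σ) : cnt q ([] : List (Par σ)) = 0 := rfl

lemma cnt_cons (q p : Par σ) (L : List (Par σ)) :
    cnt q (p :: L) = cnt q L + if p = q then 1 else 0 := by
  simp [cnt, List.countP_cons]

lemma cnt_append (q : Par σ) (A B : List (Par σ)) :
    cnt q (A ++ B) = cnt q A + cnt q B := by
  simp [cnt, List.countP_append]

lemma extract1 (hw : IsWeight w) {q : Par σ} {L : List (Par σ)}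
    (h : 1 ≤ cnt q L) : w none (some q) ≤ W w L := by
  induction L with
  | nil => simp [cnt_nil] at h
  | cons p L ih =>
    rw [W_cons]
    rcases eq_or_ne p q with rfl | hne
    · have := W_nonneg hw L; linarith
    · rw [cnt_cons, if_neg hne] at h
      have := ih (by omega)
      have := hw.1 none (some p)
      linarith

lemma extract2 (hw : IsWeight w) {q q' : Par σ} {L : List (Par σ)}
    (h : 1 ≤ cnt q L) (h' : 1 ≤ cnt q' L) (hne : q ≠ q') :
    w none (some q) + w none (some q') ≤ W w L := by
  induction L with
  | nil => simp [cnt_nil] at h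
  | cons p L ih =>
    rw [W_cons]
    rw [cnt_cons] at h h'
    rcases eq_or_ne p q with rfl | hq
    · rw [if_neg hne] at h'
      have := extract1 hw (show 1 ≤ cnt q' L by omega)
      linarith
    · rw [if_neg hq] at h
      rcases eq_or_ne p q' with rfl | hq'
      · have := extract1 hw (show 1 ≤ cnt q L by omega)
        linarith
      · rw [if_neg hq'] at h'
        have := ih (by omega) (by omega)
        have := hw.1 none (some p)
        linarith

lemma extract2' (hw : IsWeight w) {q : Par σ} {L : List (Par σ)}
    (h : 2 ≤ cnt q L) :
    w none (some q) + w none (some q) ≤ W w L := by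
  induction L with
  | nil => simp [cnt_nil] at h
  | cons p L ih =>
    rw [W_cons]
    rw [cnt_cons] at h
    rcases eq_or_ne p q with rfl | hq
    · rw [if_pos rfl] at h
      have := extract1 hw (show 1 ≤ cnt p L by omega)
      linarith
    · rw [if_neg hq] at h
      have := ih (by omega)
      have := hw.1 none (some p)
      linarith

end cnt

end DyckPairAux
namespace DyckPairAux

variable {σ : Type*} {w : Option (Par σ) → Option (Par σ) → ℝ}

lemma edAux_nonneg (hw : IsWeight w) {X Y : List (Par σ)} {c : ℝ}
    (h : EdAux w X Y c) : 0 ≤ c := by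
  induction h with
  | nil => exact le_refl 0
  | del a _ ih => have := hw.1 (some a) none; linarith
  | ins b _ ih => have := hw.1 none (some b); linarith
  | sub a b _ ih => have := hw.1 (some a) (some b); linarith

lemma edAux_exists (w : Option (Par σ) → Option (Par σ) → ℝ) :
    ∀ X Y : List (Par σ), ∃ c, EdAux w X Y c := by
  intro X
  induction X with
  | nil =>
    intro Y
    induction Y with
    | nil => exact ⟨0, .nil⟩
    | cons b Y ih => obtain ⟨c, hc⟩ := ih; exact ⟨_, .ins b hc⟩
  | cons a X ih =>
    intro Y
    obtain ⟨c, hc⟩ := ih Y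
    exact ⟨_, .del a hc⟩

lemma ed_le (hw : IsWeight w) {X Y : List (Par σ)} {c : ℝ} (h : EdAux w X Y c) :
    ed w X Y ≤ c :=
  csInf_le ⟨0, fun _ hc => edAux_nonneg hw hc⟩ h

lemma ed_nonneg (hw : IsWeight w) (X Y : List (Par σ)) : 0 ≤ ed w X Y :=
  Real.sInf_nonneg fun _ hc => edAux_nonneg hw hc

lemma edAux_step (hw : IsWeight w) (x u : Option (Par σ)) {X Y : List (Par σ)} {c : ℝ}
    (h : EdAux w X Y c) :
    EdAux w (x.toList ++ X) (u.toList ++ Y) (w x u + c) := by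
  cases x with
  | none =>
    cases u with
    | none => simpa [hw.2 none] using h
    | some b => exact .ins b h
  | some a =>
    cases u with
    | none => exact .del a h
    | some b => exact .sub a b h

/-- Decomposition for `X = []`. -/
lemma decomp0 {X Y : List (Par σ)} {c : ℝ} (h : EdAux w X Y c) (hX : X = []) :
    c = W w Y := by
  induction h with
  | nil => simp [W_nil]
  | del a _ ih => simp at hX
  | ins b _ ih => rw [W_cons, ih hX]
  | sub a b _ ih => simp at hX

/-- Decomposition for `X = [a]`. -/
lemma decomp1 {X Y : List (Par σ)} {c : ℝ} (h : EdAux w X Y c) (a : Par σ)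
    (hX : X = [a]) :
    ∃ (P : List (Par σ)) (u : Option (Par σ)) (R : List (Par σ)),
      Y = P ++ u.toList ++ R ∧ c = W w P + w (some a) u + W w R := by
  induction h with
  | nil => simp at hX
  | @del X Y c a₀ h ih =>
    obtain ⟨rfl, rfl⟩ : a₀ = a ∧ X = [] := by simpa using hX
    exact ⟨[], none, Y, by simp, by rw [decomp0 h rfl]; simp [W_nil]; try ring⟩
  | @ins X Y c b h ih =>
    obtain ⟨P, u, R, rfl, hc⟩ := ih hX
    exact ⟨b :: P, u, R, by simp, by rw [W_cons, hc]; ring⟩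
  | @sub X Y c a₀ b h ih =>
    obtain ⟨rfl, rfl⟩ : a₀ = a ∧ X = [] := by simpa using hX
    exact ⟨[], some b, Y, by simp, by rw [decomp0 h rfl]; simp [W_nil]; try ring⟩

/-- Decomposition for `X = [a, b]`. -/
lemma decomp2 {X Y : List (Par σ)} {c : ℝ} (h : EdAux w X Y c) (a b : Par σ)
    (hX : X = [a, b]) :
    ∃ (P : List (Par σ)) (u : Option (Par σ)) (Q : List (Par σ))
      (v : Option (Par σ)) (R : List (Par σ)),
      Y = P ++ u.toList ++ Q ++ v.toList ++ R ∧
      c = W w P + w (some a) u + W w Q + w (some b) v + W w R := by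
  induction h with
  | nil => simp at hX
  | @del X Y c a₀ h ih =>
    obtain ⟨rfl, rfl⟩ : a₀ = a ∧ X = [b] := by simpa using hX
    obtain ⟨Q, v, R, rfl, hc⟩ := decomp1 h b rfl
    exact ⟨[], none, Q, v, R, by simp, by rw [hc]; simp [W_nil]; try ring⟩
  | @ins X Y c b₀ h ih =>
    obtain ⟨P, u, Q, v, R, rfl, hc⟩ := ih hX
    exact ⟨b₀ :: P, u, Q, v, R, by simp, by rw [W_cons, hc]; ring⟩
  | @sub X Y c a₀ b₀ h ih =>
    obtain ⟨rfl, rfl⟩ : a₀ = a ∧ X = [b] := by simpa using hX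
    obtain ⟨Q, v, R, rfl, hc⟩ := decomp1 h b rfl
    exact ⟨[], some b₀, Q, v, R, by simp, by rw [hc]; simp [W_nil]; try ring⟩

end DyckPairAux
namespace DyckPairAux

variable {σ : Type*} [DecidableEq (Par σ)]

lemma dyck_cnt {Y : List (Par σ)} (h : IsDyck Y) (q : Par σ) :
    cnt q Y = cnt (parCompl q) Y := by
  induction h with
  | nil => rfl
  | node a hF hG ihF ihG =>
    obtain ⟨qa, qb⟩ := q
    rcases eq_or_ne a qa with rfl | hne
    · cases qb <;>
        simp [cnt_append, cnt_cons, parCompl, Prod.ext_iff] at ihF ihG ⊢ <;> omega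
    · cases qb <;>
        simp [cnt_append, cnt_cons, parCompl, Prod.ext_iff, hne] at ihF ihG ⊢ <;> omega

lemma dyck_prefix {Y : List (Par σ)} (h : IsDyck Y) :
    ∀ A B : List (Par σ), Y = A ++ B → ∀ s : σ, cnt (s, false) A ≤ cnt (s, true) A := by
  induction h with
  | nil =>
    intro A B hAB s
    obtain ⟨rfl, rfl⟩ := List.append_eq_nil_iff.mp hAB.symm
    simp [cnt_nil]
  | @node a F G hF hG ihF ihG =>
    intro A B hAB s
    cases A with
    | nil => simp [cnt_nil]
    | cons p A' =>
      have hp : (a, true) = p ∧ F ++ (a, false) :: G = A' ++ B := by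
        simpa using hAB
      obtain ⟨rfl, hA'B⟩ := hp
      rcases List.append_eq_append_iff.mp hA'B.symm with ⟨a', hF', hB⟩ | ⟨c', hA', hd⟩
      · -- F = A' ++ a'
        have h0 := ihF A' a' hF' s
        rcases eq_or_ne a s with rfl | hne
        · simp [cnt_cons, Prod.ext_iff]; omega
        · simp [cnt_cons, Prod.ext_iff, hne]; omega
      · -- A' = F ++ c', (a,false) :: G = c' ++ B
        cases c' with
        | nil =>
          simp only [List.append_nil] at hA'
          subst hA'
          have h1 := dyck_cnt hF (s, true)
          rcases eq_or_ne a s with rfl | hne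
          · simp [cnt_cons, parCompl, Prod.ext_iff] at h1 ⊢ <;> omega
          · simp [cnt_cons, parCompl, Prod.ext_iff, hne] at h1 ⊢ <;> omega
        | cons p' c'' =>
          have hp' : (a, false) = p' ∧ G = c'' ++ B := by simpa using hd
          obtain ⟨rfl, hG'⟩ := hp'
          subst hA'
          have h1 := dyck_cnt hF (s, true)
          have h2 := ihG c'' B hG' s
          rcases eq_or_ne a s with rfl | hne
          · simp [cnt_cons, cnt_append, parCompl, Prod.ext_iff] at h1 h2 ⊢ <;> omega
          · simp [cnt_cons, cnt_append, parCompl, Prod.ext_iff, hne] at h1 h2 ⊢ <;> omega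

end DyckPairAux
namespace DyckPairAux

variable {σ : Type*}

@[simp] lemma parCompl_parCompl (b : Par σ) : parCompl (parCompl b) = b := by
  cases b; simp [parCompl]

lemma parCompl_ne (b : Par σ) : parCompl b ≠ b := by
  cases b with
  | mk s t => cases t <;> simp [parCompl]

lemma parCompl_inj {b b' : Par σ} (h : parCompl b = parCompl b') : b = b' := by
  have := congrArg parCompl h
  simpa using this

variable {w : Option (Par σ) → Option (Par σ) → ℝ}

lemma skew_del (hw : Skewmetric w) (b : Par σ) :
    w (some b) none = w none (some (parCompl b)) := by
  have := hw.2.2 (some b) none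
  simpa using this

lemma tri_del (hw : Skewmetric w) (x : Option (Par σ)) (b : Par σ) :
    w x none ≤ w x (some b) + w none (some (parCompl b)) := by
  have := hw.2.1 x (some b) none
  rw [skew_del hw b] at this
  exact this

section key
variable [DecidableEq (Par σ)]

lemma cnt_singleton (q b : Par σ) : cnt q [b] = if b = q then 1 else 0 := by
  simp [cnt_cons, cnt_nil]

lemma cnt_opt (q : Par σ) (u : Option (Par σ)) :
    cnt q u.toList = if u = some q then 1 else 0 := by
  cases u with
  | none => simp [cnt_nil]
  | some b => simp [cnt_singleton]

/-- Helper for the one-character cases. -/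
lemma single_case (hw : Skewmetric w) (t : Par σ) {P R : List (Par σ)}
    {u : Option (Par σ)} (hY : IsDyck (P ++ u.toList ++ R)) :
    w (some t) none ≤ W w P + w (some t) u + W w R := by
  have hP := W_nonneg hw.1 P
  have hR := W_nonneg hw.1 R
  cases u with
  | none => linarith
  | some b =>
    have htri := tri_del hw (some t) b
    have hc := dyck_cnt (q := b) hY
    have h1 : 1 ≤ cnt (parCompl b) (P ++ R) := by
      simp [cnt_append, cnt_opt, cnt_cons, cnt_singleton, cnt_nil, Ne.symm (parCompl_ne b)] at hc ⊢
      omega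
    have h2 := extract1 hw.1 h1
    rw [W_append] at h2
    linarith

lemma key (hw : Skewmetric w) (x y : Option (Par σ)) {Y : List (Par σ)} {c : ℝ}
    (hY : IsDyck Y) (h : EdAux w (x.toList ++ y.toList) Y c) :
    ∃ z : Option (Par σ), (z = none ∨ ∃ a : σ, z = some (a, true)) ∧
      w x z + w y (z.map parCompl) ≤ c := by
  have h00 : w (none : Option (Par σ)) none = 0 := hw.1.2 none
  cases x with
  | none =>
    cases y with
    | none =>
      refine ⟨none, Or.inl rfl, ?_⟩
      have := decomp0 h (by simp)
      have := W_nonneg hw.1 Y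
      simp only [Option.map_none, h00]
      linarith
    | some q =>
      obtain ⟨P, u, R, rfl, hc⟩ := decomp1 h q (by simp)
      refine ⟨none, Or.inl rfl, ?_⟩
      have := single_case hw q hY
      simp only [Option.map_none, h00]
      linarith
  | some p =>
    cases y with
    | none =>
      obtain ⟨P, u, R, rfl, hc⟩ := decomp1 h p (by simp)
      refine ⟨none, Or.inl rfl, ?_⟩
      have := single_case hw p hY
      simp only [Option.map_none, h00]
      linarith
    | some q =>
      obtain ⟨P, u, Q, v, R, rfl, hc⟩ := decomp2 h p q (by simp)
      have hP := W_nonneg hw.1 P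
      have hQ := W_nonneg hw.1 Q
      have hR := W_nonneg hw.1 R
      have hWa : W w (P ++ (Q ++ R)) = W w P + W w Q + W w R := by
        rw [W_append, W_append]; ring
      cases u with
      | none =>
        cases v with
        | none =>
          refine ⟨none, Or.inl rfl, ?_⟩
          simp only [Option.map_none]
          linarith [hw.1.1 (some p) none, hw.1.1 (some q) none]
        | some b =>
          refine ⟨none, Or.inl rfl, ?_⟩
          simp only [Option.map_none]
          have htri := tri_del hw (some q) b
          have hcb := dyck_cnt (q := b) hY
          have h1 : 1 ≤ cnt (parCompl b) (P ++ (Q ++ R)) := by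
            simp [cnt_append, cnt_opt, cnt_cons, cnt_singleton, cnt_nil, cnt_nil, Ne.symm (parCompl_ne b)] at hcb ⊢
            omega
          have h2 := extract1 hw.1 h1
          rw [hWa] at h2
          linarith
      | some b =>
        cases v with
        | none =>
          refine ⟨none, Or.inl rfl, ?_⟩
          simp only [Option.map_none]
          have htri := tri_del hw (some p) b
          have hcb := dyck_cnt (q := b) hY
          have h1 : 1 ≤ cnt (parCompl b) (P ++ (Q ++ R)) := by
            simp [cnt_append, cnt_opt, cnt_cons, cnt_singleton, cnt_nil, cnt_nil, Ne.symm (parCompl_ne b)] at hcb ⊢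
            omega
          have h2 := extract1 hw.1 h1
          rw [hWa] at h2
          linarith
        | some b' =>
          by_cases hbb : b.2 = true ∧ b' = parCompl b
          · obtain ⟨hb2, rfl⟩ := hbb
            refine ⟨some b, Or.inr ⟨b.1, by rw [← hb2]⟩, ?_⟩
            simp only [Option.map_some]
            linarith
          · refine ⟨none, Or.inl rfl, ?_⟩
            simp only [Option.map_none]
            have htri1 := tri_del hw (some p) b
            have htri2 := tri_del hw (some q) b'
            have hkey : w none (some (parCompl b)) + w none (some (parCompl b')) ≤
                W w P + W w Q + W w R := by
              have hcb := dyck_cnt (q := b) hY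
              rcases eq_or_ne b b' with rfl | hne
              · have h1 : 2 ≤ cnt (parCompl b) (P ++ (Q ++ R)) := by
                  simp [cnt_append, cnt_opt, cnt_cons, cnt_singleton, cnt_nil, Ne.symm (parCompl_ne b)] at hcb ⊢
                  omega
                have := extract2' hw.1 h1
                rw [hWa] at this
                linarith
              · rcases eq_or_ne b' (parCompl b) with rfl | hne2
                · -- closing b, with its opening parCompl b later at v
                  obtain ⟨s, sb⟩ := b
                  cases sb with
                  | true => exact absurd ⟨rfl, rfl⟩ hbb
                  | false =>
                    simp only [parCompl, Bool.not_false, Bool.not_true] at hY hcb hne ⊢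
                    have hpre := dyck_prefix hY (P ++ [(s, false)])
                      (Q ++ (s, true) :: R) (by simp [parCompl]) s
                    have hPb : 1 ≤ cnt (s, true) P := by
                      simp [cnt_append, cnt_singleton, cnt_cons, cnt_nil] at hpre
                      omega
                    have hLb : 1 ≤ cnt (s, false) (P ++ (Q ++ R)) := by
                      simp [cnt_append, cnt_opt, cnt_cons, cnt_singleton, cnt_nil] at hcb ⊢
                      omega
                    have hLb' : 1 ≤ cnt (s, true) (P ++ (Q ++ R)) := by
                      rw [cnt_append]
                      omega
                    have := extract2 hw.1 hLb' hLb (by simp)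
                    rw [hWa] at this
                    linarith
                · -- generic: both complements among the rest
                  have hcb' := dyck_cnt (q := b') hY
                  have hne3 : b ≠ parCompl b' := fun hx => hne2 (by
                    rw [hx, parCompl_parCompl])
                  have h1 : 1 ≤ cnt (parCompl b) (P ++ (Q ++ R)) := by
                    simp [cnt_append, cnt_opt, cnt_cons, cnt_singleton, cnt_nil, Ne.symm (parCompl_ne b),
                      Ne.symm hne, hne2] at hcb ⊢
                    omega
                  have h2 : 1 ≤ cnt (parCompl b') (P ++ (Q ++ R)) := by
                    simp [cnt_append, cnt_opt, cnt_cons, cnt_singleton, cnt_nil, Ne.symm (parCompl_ne b'),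
                      hne, hne3] at hcb' ⊢
                    omega
                  have hne4 : parCompl b ≠ parCompl b' := fun hx => hne (parCompl_inj hx)
                  have := extract2 hw.1 h1 h2 hne4
                  rw [hWa] at this
                  linarith
            linarith
end key

end DyckPairAux
/-- For every skewmetric weight function `w` and all `x, y ∈ Σ ∪ {ε}`,
`dyck^w(xy) = min_{z ∈ T ∪ {ε}} (w(x, z) + w(y, z̄))`. -/
theorem dyck_pair (w : Option (Par σ) → Option (Par σ) → ℝ) (hw : Skewmetric w)
    (x y : Option (Par σ)) :
    dyck w (x.toList ++ y.toList) =
      sInf {c | ∃ z : Option (Par σ),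
        (z = none ∨ ∃ a : σ, z = some (a, true)) ∧
        c = w x z + w y (z.map parCompl)} := by
  classical
  have hbddR : BddBelow {c | ∃ z : Option (Par σ),
      (z = none ∨ ∃ a : σ, z = some (a, true)) ∧
      c = w x z + w y (z.map parCompl)} := by
    refine ⟨0, ?_⟩
    rintro c ⟨z, hz, rfl⟩
    have := hw.1.1 x z
    have := hw.1.1 y (z.map parCompl)
    linarith
  apply le_antisymm
  · -- dyck ≤ sInf of candidates
    refine le_csInf ⟨_, ⟨none, Or.inl rfl, rfl⟩⟩ ?_
    rintro c ⟨z, hz, rfl⟩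
    have hDyck : IsDyck (z.toList ++ (z.map parCompl).toList) := by
      rcases hz with rfl | ⟨a, rfl⟩
      · exact IsDyck.nil
      · have := IsDyck.node a (F := []) (G := []) IsDyck.nil IsDyck.nil
        simpa [parCompl] using this
    have h1 := DyckPairAux.edAux_step (w := w) hw.1 y (z.map parCompl) EdAux.nil
    rw [List.append_nil, List.append_nil] at h1
    have h2 := DyckPairAux.edAux_step (w := w) hw.1 x z h1
    have h3 : ed w (x.toList ++ y.toList) (z.toList ++ (z.map parCompl).toList) ≤
        w x z + w y (z.map parCompl) := by
      have := DyckPairAux.ed_le hw.1 h2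
      linarith
    have h4 : dyck w (x.toList ++ y.toList) ≤
        ed w (x.toList ++ y.toList) (z.toList ++ (z.map parCompl).toList) := by
      apply csInf_le
      · refine ⟨0, ?_⟩
        rintro c ⟨Y', hY', rfl⟩
        exact DyckPairAux.ed_nonneg hw.1 _ _
      · exact ⟨_, hDyck, rfl⟩
    linarith
  · -- sInf of candidates ≤ dyck
    refine le_csInf ⟨_, [], IsDyck.nil, rfl⟩ ?_
    rintro c ⟨Y, hY, rfl⟩
    refine le_csInf ?_ ?_
    · obtain ⟨c', hc'⟩ := DyckPairAux.edAux_exists w (x.toList ++ y.toList) Y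
      exact ⟨c', hc'⟩
    · intro c' hc'
      obtain ⟨z, hz, hle⟩ := DyckPairAux.key hw x y hY hc'
      exact le_trans (csInf_le hbddR ⟨z, hz, rfl⟩) hle
end
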